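/- arXiv:2308.10720 — 5 statements merged into one kernel-verified Lean document; each statement's English description precedes it below -/
import Mathlib

section
/- Let ψ : ℝ → ℝ be continuous. The linear span of the family of ridge functions {x ↦ ψ(a·x + b) : a, b ∈ ℝ} is dense in C(K) with respect to the uniform norm for every compact set K ⊆ ℝ if and only if ψ is not a polynomial. -/
open MeasureTheory Filter Topology Polynomial Set
open scoped ContDiff Convolution

noncomputable section UAT
namespace UAT


def ridgeCM (K : Set ℝ) (f : ℝ → ℝ) (hf : Continuous f) (a b : ℝ) : C(K, ℝ) :=
  ⟨fun x => f (a * x + b),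
    hf.comp ((continuous_const.mul continuous_subtype_val).add continuous_const)⟩

@[simp] lemma ridgeCM_apply {K : Set ℝ} (f : ℝ → ℝ) (hf : Continuous f) (a b : ℝ) (x : K) :
    ridgeCM K f hf a b x = f (a * x + b) := rfl

def Xc (K : Set ℝ) : C(K, ℝ) := ⟨fun x => (x : ℝ), continuous_subtype_val⟩

@[simp] lemma Xc_apply {K : Set ℝ} (x : K) : Xc K x = (x : ℝ) := rfl

/-- Difference quotient step: if all the weighted ridges of `g` lie in a closed submodule `V`,
then so do the weighted ridges of `x * g'`. -/
lemma mem_of_diffquot {K : Set ℝ} [CompactSpace K] (V : Submodule ℝ C(K, ℝ))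
    (hV : IsClosed (V : Set C(K, ℝ))) (w : C(K, ℝ)) {g g' : ℝ → ℝ}
    (hgc : Continuous g) (hg : ∀ x, HasDerivAt g (g' x) x) (hg' : Continuous g')
    (hmem : ∀ a b : ℝ, w * ridgeCM K g hgc a b ∈ V) (a b : ℝ) :
    w * (Xc K * ridgeCM K g' hg' a b) ∈ V := by
  -- a bound on K
  have hK : IsCompact K := isCompact_iff_compactSpace.mpr ‹_›
  obtain ⟨M0, hM0⟩ := hK.isBounded.subset_closedBall 0
  set M : ℝ := max M0 0 with hMdef
  have hM : ∀ x : K, |(x : ℝ)| ≤ M := by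
    intro x
    have := hM0 x.2
    rw [Metric.mem_closedBall, Real.dist_eq, sub_zero] at this
    exact this.trans (le_max_left _ _)
  have hMnn : 0 ≤ M := le_max_right _ _
  set T : C(K, ℝ) := w * (Xc K * ridgeCM K g' hg' a b) with hT
  set D : ℝ → C(K, ℝ) :=
    fun h => h⁻¹ • (w * ridgeCM K g hgc (a + h) b - w * ridgeCM K g hgc a b) with hD
  have hDV : ∀ h, D h ∈ V := fun h => V.smul_mem _ (V.sub_mem (hmem _ _) (hmem _ _))
  suffices hTend : Tendsto D (𝓝[≠] (0 : ℝ)) (𝓝 T) by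
    exact hV.mem_of_tendsto hTend (Eventually.of_forall hDV)
  rw [Metric.tendsto_nhdsWithin_nhds]
  intro ε hε
  set R : ℝ := (|a| + 1) * (M + 1) + |b| + 1 with hR
  have hUC := (isCompact_Icc (a := -R) (b := R)).uniformContinuousOn_of_continuous
    hg'.continuousOn
  rw [Metric.uniformContinuousOn_iff] at hUC
  set ε' : ℝ := ε / (2 * (‖w‖ + 1) * (M + 1)) with hε'def
  have hε' : 0 < ε' := by positivity
  obtain ⟨δ₀, hδ₀, hδ⟩ := hUC ε' hε'
  refine ⟨min δ₀ 1 / (M + 1), by positivity, ?_⟩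
  intro h hh hdist
  have hne : h ≠ 0 := hh
  rw [Real.dist_eq, sub_zero] at hdist
  rw [ContinuousMap.dist_lt_iff hε]
  intro x
  set y : ℝ := a * x + b with hy
  set u : ℝ := h * x with hu
  have hxM : |(x : ℝ)| ≤ M := hM x
  have huδ : |u| < min δ₀ 1 := by
    have h1 : |u| = |h| * |(x : ℝ)| := abs_mul _ _
    have h2 : |h| * |(x : ℝ)| ≤ |h| * (M + 1) := by
      apply mul_le_mul_of_nonneg_left (hxM.trans (by linarith)) (abs_nonneg h)
    have h3 : |h| * (M + 1) < (min δ₀ 1 / (M + 1)) * (M + 1) := by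
      apply mul_lt_mul_of_pos_right hdist (by linarith)
    rw [div_mul_cancel₀] at h3
    · linarith
    · positivity
  have huδ₀ : |u| < δ₀ := huδ.trans_le (min_le_left _ _)
  have hu1 : |u| ≤ 1 := (huδ.trans_le (min_le_right _ _)).le
  have hyR : |y| + 1 ≤ R := by
    have : |y| ≤ |a| * M + |b| := by
      calc |y| ≤ |a * (x : ℝ)| + |b| := abs_add_le _ _
        _ = |a| * |(x : ℝ)| + |b| := by rw [abs_mul]
        _ ≤ |a| * M + |b| := by
            have := mul_le_mul_of_nonneg_left hxM (abs_nonneg a); linarith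
    have hMM : |a| * M ≤ (|a| + 1) * (M + 1) := by nlinarith [abs_nonneg a]
    simp only [hR]; linarith
  -- the key MVT estimate
  have claim : |g (y + u) - g y - u * g' y| ≤ ε' * |u| := by
    set F : ℝ → ℝ := fun t => g t - t * g' y with hF
    set s : Set ℝ := Icc (y - |u|) (y + |u|) with hs
    have hsub : s ⊆ Icc (-R) R := by
      intro t ht
      rw [mem_Icc] at *
      constructor
      · have := neg_abs_le y; linarith [ht.1]
      · have := le_abs_self y; linarith [ht.2]
    have hFds : ∀ t ∈ s, HasDerivWithinAt F (g' t - g' y) s t := fun t _ =>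
      ((hg t).sub (hasDerivAt_mul_const (g' y))).hasDerivWithinAt
    have hbound : ∀ t ∈ s, ‖g' t - g' y‖ ≤ ε' := by
      intro t ht
      have h1 : t ∈ Icc (-R) R := hsub ht
      have h2 : y ∈ Icc (-R) R := by
        rw [mem_Icc]
        constructor
        · have := neg_abs_le y; linarith
        · have := le_abs_self y; linarith
      have hty : dist t y < δ₀ := by
        rw [Real.dist_eq]
        rw [mem_Icc] at ht
        have : |t - y| ≤ |u| := abs_le.mpr ⟨by linarith [ht.1], by linarith [ht.2]⟩
        linarith
      have := hδ t h1 y h2 hty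
      rw [Real.dist_eq] at this
      exact this.le
    have hys : y ∈ s := by
      rw [mem_Icc]; constructor <;> linarith [abs_nonneg u]
    have hyus : y + u ∈ s := by
      rw [mem_Icc]; constructor
      · linarith [neg_abs_le u]
      · linarith [le_abs_self u]
    have hmvt := Convex.norm_image_sub_le_of_norm_hasDerivWithin_le hFds hbound
      (convex_Icc _ _) hys hyus
    have heq : F (y + u) - F y = g (y + u) - g y - u * g' y := by simp only [hF]; ring
    rw [heq] at hmvt
    simpa using hmvt
  -- final estimate
  have hDx : (D h) x = w x * (h⁻¹ * (g (y + u) - g y)) := by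
    simp only [hD, ContinuousMap.smul_apply, ContinuousMap.sub_apply, ContinuousMap.mul_apply,
      ridgeCM_apply, smul_eq_mul]
    have harg : (a + h) * x + b = y + u := by simp only [hy, hu]; ring
    rw [harg]
    ring
  have hTx : T x = w x * ((x : ℝ) * g' y) := rfl
  rw [Real.dist_eq, hDx, hTx]
  have hinner : |h⁻¹ * (g (y + u) - g y) - (x : ℝ) * g' y| ≤ ε' * (M + 1) := by
    have hxg : (x : ℝ) * g' y = h⁻¹ * (u * g' y) := by
      rw [hu]; field_simp
    rw [hxg, ← mul_sub, abs_mul, abs_inv]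
    have h1 : |g (y + u) - g y - u * g' y| ≤ ε' * |u| := claim
    have h2 : |u| ≤ |h| * (M + 1) := by
      rw [abs_mul]
      exact mul_le_mul_of_nonneg_left (hxM.trans (by linarith)) (abs_nonneg h)
    have hhpos : 0 < |h| := abs_pos.mpr hne
    calc |h|⁻¹ * |g (y + u) - g y - u * g' y| ≤ |h|⁻¹ * (ε' * (|h| * (M + 1))) := by
          apply mul_le_mul_of_nonneg_left _ (by positivity)
          exact h1.trans (mul_le_mul_of_nonneg_left h2 hε'.le)
      _ = ε' * (M + 1) := by field_simp
  calc |w x * (h⁻¹ * (g (y + u) - g y)) - w x * ((x : ℝ) * g' y)|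
      = |w x| * |h⁻¹ * (g (y + u) - g y) - (x : ℝ) * g' y| := by rw [← mul_sub, abs_mul]
    _ ≤ ‖w‖ * (ε' * (M + 1)) := by
        apply mul_le_mul (w.norm_coe_le_norm x) hinner (abs_nonneg _) (norm_nonneg w)
    _ ≤ (‖w‖ + 1) * (ε' * (M + 1)) := by nlinarith [norm_nonneg w, hε'.le, hMnn]
    _ = ε / 2 := by rw [hε'def]; field_simp
    _ < ε := by linarith


lemma integral_mem_of_closed {E : Type*} [NormedAddCommGroup E] [NormedSpace ℝ E] [CompleteSpace E]
    {X : Type*} [MeasurableSpace X] {μ : Measure X}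
    (V : Submodule ℝ E) (hV : IsClosed (V : Set E)) {f : X → E} (hf : Integrable f μ)
    (hfV : ∀ t, f t ∈ V) : (∫ t, f t ∂μ) ∈ V := by
  haveI : IsClosed (V : Set E) := hV
  let L : E →L[ℝ] E ⧸ V :=
    LinearMap.mkContinuous V.mkQ 1 (fun x => by simpa using Submodule.Quotient.norm_mk_le V x)
  have hL : L (∫ t, f t ∂μ) = 0 := by
    rw [← L.integral_comp_comm hf]
    have h0 : ∀ t, L (f t) = 0 := fun t => (Submodule.Quotient.mk_eq_zero V).mpr (hfV t)
    simp [h0]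
  have : V.mkQ (∫ t, f t ∂μ) = 0 := hL
  rwa [Submodule.mkQ_apply, Submodule.Quotient.mk_eq_zero V] at this




/-- Every polynomial has a polynomial antiderivative, with degree control. -/
lemma exists_antideriv (q : Polynomial ℝ) (k : ℕ) (hq : q.degree < k) :
    ∃ P : Polynomial ℝ, P.derivative = q ∧ P.degree < k + 1 := by
  refine ⟨q.sum fun n a => C (a / (n + 1)) * X ^ (n + 1), ?_, ?_⟩
  · rw [Polynomial.sum_def, map_sum]
    have key : ∀ n ∈ q.support, derivative (C (q.coeff n / (n + 1)) * X ^ (n + 1)) =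
        C (q.coeff n) * X ^ n := by
      intro n _
      have hne : ((n : ℝ) + 1) ≠ 0 := by positivity
      rw [derivative_C_mul, derivative_X_pow, ← mul_assoc, ← C_mul]
      push_cast
      rw [div_mul_cancel₀ _ hne]
    calc (∑ n ∈ q.support, derivative (C (q.coeff n / (n + 1)) * X ^ (n + 1)))
        = ∑ n ∈ q.support, C (q.coeff n) * X ^ n := Finset.sum_congr rfl key
      _ = q.sum fun n a => C a * X ^ n := (Polynomial.sum_def q (fun n a => C a * X ^ n)).symm
      _ = q := sum_C_mul_X_pow_eq q
  · rw [Polynomial.sum_def]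
    refine lt_of_le_of_lt (degree_sum_le _ _) ?_
    rw [Finset.sup_lt_iff (by exact WithBot.bot_lt_coe _)]
    intro n hn
    refine lt_of_le_of_lt (degree_C_mul_X_pow_le _ _) ?_
    have h1 : (n : WithBot ℕ) ≤ q.degree := le_degree_of_ne_zero (mem_support_iff.mp hn)
    have h2 : (n : WithBot ℕ) < k := lt_of_le_of_lt h1 hq
    exact_mod_cast (by exact_mod_cast Nat.succ_lt_succ (by exact_mod_cast h2) : (n+1 : ℕ) < k+1)

/-- A smooth function with vanishing `k`-th derivative is a polynomial of degree `< k`. -/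
lemma poly_of_iteratedDeriv_eq_zero :
    ∀ (k : ℕ) (f : ℝ → ℝ), ContDiff ℝ ∞ f → (∀ x, iteratedDeriv k f x = 0) →
      ∃ p : Polynomial ℝ, p.degree < (k : WithBot ℕ) ∧ ∀ x, f x = p.eval x := by
  intro k
  induction k with
  | zero =>
    intro f _ h
    exact ⟨0, by simpa using WithBot.bot_lt_coe 0, fun x => by simpa using h x⟩
  | succ k ih =>
    intro f hf h
    have hdf : ContDiff ℝ ∞ (deriv f) := (contDiff_infty_iff_deriv.mp hf).2
    have hd : ∀ x, iteratedDeriv k (deriv f) x = 0 := by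
      intro x; rw [← iteratedDeriv_succ']; exact h x
    obtain ⟨q, hq, hq'⟩ := ih (deriv f) hdf hd
    obtain ⟨P, hP, hPd⟩ := exists_antideriv q k hq
    have hderiv0 : ∀ x, HasDerivAt (fun y => f y - P.eval y) 0 x := by
      intro x
      have h1 : HasDerivAt f (q.eval x) x := by
        have hdiff := ((hf.differentiable (by simp)).differentiableAt (x := x)).hasDerivAt
        rwa [hq' x] at hdiff
      have h2 : HasDerivAt (fun y => P.eval y) (q.eval x) x := by
        simpa [hP] using P.hasDerivAt x
      have h3 := h1.sub h2
      rw [sub_self] at h3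
      exact h3
    have hconst : ∀ x : ℝ, f x - P.eval x = f 0 - P.eval 0 := fun x =>
      is_const_of_deriv_eq_zero (fun y => (hderiv0 y).differentiableAt)
        (fun y => (hderiv0 y).deriv) x 0
    refine ⟨P + C (f 0 - P.eval 0), ?_, fun x => by have := hconst x; simp; linarith⟩
    refine lt_of_le_of_lt (degree_add_le _ _) (max_lt hPd ?_)
    exact lt_of_le_of_lt degree_C_le (by exact_mod_cast WithBot.coe_lt_coe.mpr (Nat.succ_pos k))

/-- A pointwise limit of polynomials of uniformly bounded degree is a polynomial. -/
lemma poly_of_pointwise_limit {k : ℕ} (f : ℝ → ℝ) (p : ℕ → Polynomial ℝ)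
    (hdeg : ∀ n, (p n).degree < (k : WithBot ℕ))
    (hconv : ∀ x : ℝ, Tendsto (fun n => (p n).eval x) atTop (𝓝 (f x))) :
    ∃ q : Polynomial ℝ, ∀ x, f x = q.eval x := by
  classical
  set s : Finset ℕ := Finset.range k with hs
  set v : ℕ → ℝ := fun i => (i : ℝ) with hv
  have hinj : Set.InjOn v s := fun a _ b _ hab => Nat.cast_injective hab
  refine ⟨Lagrange.interpolate s v (fun i => f (v i)), fun x => ?_⟩
  have h1 : ∀ n, (p n).eval x =
      ∑ i ∈ s, (p n).eval (v i) * (Lagrange.basis s v i).eval x := by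
    intro n
    have hrepr := Lagrange.eq_interpolate (v := v) (s := s) (f := p n) hinj
      (by rw [hs, Finset.card_range]; exact hdeg n)
    calc (p n).eval x = (Lagrange.interpolate s v fun i => (p n).eval (v i)).eval x := by
          rw [← hrepr]
      _ = ∑ i ∈ s, (p n).eval (v i) * (Lagrange.basis s v i).eval x := by
          rw [Lagrange.interpolate_apply, Polynomial.eval_finset_sum]
          exact Finset.sum_congr rfl fun i _ => by rw [eval_mul, eval_C]
  have h2 : Tendsto (fun n => (p n).eval x) atTop
      (𝓝 (∑ i ∈ s, f (v i) * (Lagrange.basis s v i).eval x)) := by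
    simp only [h1]
    exact tendsto_finset_sum _ fun i _ => (hconv (v i)).mul_const _
  have := tendsto_nhds_unique (hconv x) h2
  rw [this, Lagrange.interpolate_apply, Polynomial.eval_finset_sum]
  exact Finset.sum_congr rfl fun i _ => by rw [eval_mul, eval_C]


/-- Convolutions of `ψ` with bump functions have all their ridge functions in `V`. -/
lemma conv_ridge_mem {K : Set ℝ} [CompactSpace K] (ψ : ℝ → ℝ) (hψ : Continuous ψ)
    (V : Submodule ℝ C(K, ℝ)) (hV : IsClosed (V : Set C(K, ℝ)))
    (hridge : ∀ a b : ℝ, ridgeCM K ψ hψ a b ∈ V)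
    (φ : ContDiffBump (0 : ℝ))
    (hconv : Continuous (convolution (φ.normed volume) ψ (ContinuousLinearMap.lsmul ℝ ℝ) volume))
    (a b : ℝ) : ridgeCM K (convolution (φ.normed volume) ψ (ContinuousLinearMap.lsmul ℝ ℝ) volume) hconv a b ∈ V := by
  set G : ℝ → C(K, ℝ) := fun t => φ.normed volume t • ridgeCM K ψ hψ a (b - t) with hG
  have hGV : ∀ t, G t ∈ V := fun t => V.smul_mem _ (hridge a (b - t))
  have hGcont : Continuous G := by
    set H : C(ℝ × K, ℝ) :=
      ⟨fun p => φ.normed volume p.1 * ψ (a * p.2 + (b - p.1)),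
        ((φ.continuous_normed (μ := volume)).comp continuous_fst).mul
          (hψ.comp ((continuous_const.mul
            (continuous_subtype_val.comp continuous_snd)).add
            (continuous_const.sub continuous_fst)))⟩ with hH
    have : ∀ t, H.curry t = G t := by
      intro t
      ext x
      simp [hH, hG, smul_eq_mul]
    exact (map_continuous H.curry).congr this
  have hGsupp : HasCompactSupport G := by
    apply HasCompactSupport.mono (φ.hasCompactSupport_normed (μ := volume))
    intro t ht
    by_contra h0
    rw [Function.mem_support, not_not] at h0
    exact ht (by rw [hG]; simp [h0])
  have hGint : Integrable G volume := hGcont.integrable_of_hasCompactSupport hGsupp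
  have hmemInt : (∫ t, G t) ∈ V := integral_mem_of_closed V hV hGint hGV
  have hkey : ridgeCM K (convolution (φ.normed volume) ψ (ContinuousLinearMap.lsmul ℝ ℝ) volume) hconv a b
      = ∫ t, G t := by
    ext x
    have h1 : (∫ t, G t) x = ∫ t, G t x := by
      have h2 := (ContinuousMap.evalCLM ℝ x).integral_comp_comm hGint
      simpa [ContinuousMap.evalCLM] using h2.symm
    rw [ridgeCM_apply, h1, convolution_def]
    congr 1
    ext t
    simp only [hG, ContinuousMap.smul_apply, ridgeCM_apply, ContinuousLinearMap.lsmul_apply,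
      smul_eq_mul]
    congr 1
    ring
  rw [hkey]
  exact hmemInt
/-- Iteration: monomial-weighted ridges of iterated derivatives stay in `V`. -/
lemma iter_mem {K : Set ℝ} [CompactSpace K] (V : Submodule ℝ C(K, ℝ))
    (hV : IsClosed (V : Set C(K, ℝ))) (f : ℝ → ℝ) (hf : ContDiff ℝ ∞ f)
    (hR : ∀ a b : ℝ, ridgeCM K f hf.continuous a b ∈ V) :
    ∀ (k : ℕ) (hk : Continuous (iteratedDeriv k f)) (a b : ℝ),
      (Xc K) ^ k * ridgeCM K (iteratedDeriv k f) hk a b ∈ V := by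
  intro k
  induction k with
  | zero =>
    intro hk a b
    have heq : (Xc K) ^ 0 * ridgeCM K (iteratedDeriv 0 f) hk a b
        = ridgeCM K f hf.continuous a b := by
      ext x; simp [iteratedDeriv_zero]
    rw [heq]; exact hR a b
  | succ k ih =>
    intro hk a b
    have hgc : Continuous (iteratedDeriv k f) :=
      hf.continuous_iteratedDeriv k (by exact_mod_cast le_top)
    have hg : ∀ x, HasDerivAt (iteratedDeriv k f) (iteratedDeriv (k + 1) f x) x := by
      intro x
      have hdiff : Differentiable ℝ (iteratedDeriv k f) :=
        hf.differentiable_iteratedDeriv k (by exact_mod_cast ENat.coe_lt_top k)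
      have h1 := (hdiff x).hasDerivAt
      rwa [show deriv (iteratedDeriv k f) x = iteratedDeriv (k + 1) f x from
        by rw [iteratedDeriv_succ]] at h1
    have hstep := mem_of_diffquot V hV ((Xc K) ^ k) hgc hg hk (fun a b => ih hgc a b) a b
    have heq : (Xc K) ^ (k + 1) * ridgeCM K (iteratedDeriv (k + 1) f) hk a b
        = (Xc K) ^ k * (Xc K * ridgeCM K (iteratedDeriv (k + 1) f) hk a b) := by ring
    rw [heq]; exact hstep

set_option maxHeartbeats 2000000 in
/-- The hard direction: a non-polynomial continuous activation gives density. -/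
lemma hard_direction (ψ : ℝ → ℝ) (hψ : Continuous ψ)
    (hnp : ¬ ∃ p : Polynomial ℝ, ∀ x : ℝ, ψ x = p.eval x)
    (K : Set ℝ) (hK : IsCompact K) :
    Dense (↑(Submodule.span ℝ
      {g : C(K, ℝ) | ∃ a b : ℝ, ∀ x : K, g x = ψ (a * ↑x + b)}) : Set C(K, ℝ)) := by
  haveI : CompactSpace K := isCompact_iff_compactSpace.mp hK
  set S := {g : C(K, ℝ) | ∃ a b : ℝ, ∀ x : K, g x = ψ (a * ↑x + b)} with hSdef
  set V := (Submodule.span ℝ S).topologicalClosure with hVdef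
  have hVclosed : IsClosed (V : Set C(K, ℝ)) := Submodule.isClosed_topologicalClosure _
  have hridge : ∀ a b : ℝ, ridgeCM K ψ hψ a b ∈ V := fun a b =>
    Submodule.le_topologicalClosure _ (Submodule.subset_span ⟨a, b, fun x => rfl⟩)
  -- mollifier sequence
  have hpos : ∀ n : ℕ, (0:ℝ) < ((n:ℝ) + 1)⁻¹ := fun n => by positivity
  set φ : ℕ → ContDiffBump (0 : ℝ) := fun n =>
    ⟨((n:ℝ) + 1)⁻¹, 2 * ((n:ℝ) + 1)⁻¹, hpos n, by linarith [hpos n]⟩ with hφdef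
  set F : ℕ → ℝ → ℝ :=
    fun n => convolution ((φ n).normed volume) ψ (ContinuousLinearMap.lsmul ℝ ℝ) volume
    with hFdef
  have hFsmooth : ∀ n, ContDiff ℝ ∞ (F n) := fun n =>
    HasCompactSupport.contDiff_convolution_left _ ((φ n).hasCompactSupport_normed)
      ((φ n).contDiff_normed (n := ⊤)) (hψ.locallyIntegrable)
  have hFridge : ∀ n a b, ridgeCM K (F n) (hFsmooth n).continuous a b ∈ V :=
    fun n a b => conv_ridge_mem ψ hψ V hVclosed hridge (φ n) (hFsmooth n).continuous a b
  have hFtend : ∀ x : ℝ, Tendsto (fun n => F n x) atTop (𝓝 (ψ x)) := by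
    intro x
    apply ContDiffBump.convolution_tendsto_right_of_continuous _ hψ x
    have h2 : Tendsto (fun n : ℕ => 2 * ((n:ℝ) + 1)⁻¹) atTop (𝓝 (2 * 0)) :=
      tendsto_const_nhds.mul (tendsto_natCast_atTop_atTop.atTop_add tendsto_const_nhds).inv_tendsto_atTop
    simpa using h2
  -- all monomials lie in V
  have hmono : ∀ k : ℕ, (Xc K) ^ k ∈ V := by
    intro k
    by_contra hk
    have hzero : ∀ n b, iteratedDeriv k (F n) b = 0 := by
      intro n b
      by_contra hb
      apply hk
      have hkc : Continuous (iteratedDeriv k (F n)) :=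
        (hFsmooth n).continuous_iteratedDeriv k (by exact_mod_cast le_top)
      have hmem := iter_mem V hVclosed (F n) (hFsmooth n) (hFridge n) k hkc 0 b
      have heq : (Xc K) ^ k = (iteratedDeriv k (F n) b)⁻¹ •
          ((Xc K) ^ k * ridgeCM K (iteratedDeriv k (F n)) hkc 0 b) := by
        ext x
        simp only [ContinuousMap.smul_apply, ContinuousMap.mul_apply, ContinuousMap.pow_apply,
          Xc_apply, ridgeCM_apply, smul_eq_mul, zero_mul, zero_add]
        field_simp
      rw [heq]
      exact V.smul_mem _ hmem
    have hpoly : ∀ n, ∃ p : Polynomial ℝ, p.degree < (k : WithBot ℕ) ∧ ∀ x, F n x = p.eval x :=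
      fun n => poly_of_iteratedDeriv_eq_zero k (F n) (hFsmooth n) (hzero n)
    choose p hpdeg hpeq using hpoly
    refine hnp ?_
    refine poly_of_pointwise_limit ψ p hpdeg (fun x => ?_)
    have := hFtend x
    simpa only [hpeq] using this
  -- hence all polynomial functions lie in V
  have hpolyV : ∀ q : Polynomial ℝ, q.toContinuousMapOn K ∈ V := by
    intro q
    induction q using Polynomial.induction_on' with
    | add p q hp hq =>
      have : (p + q).toContinuousMapOn K = p.toContinuousMapOn K + q.toContinuousMapOn K := by
        ext x; simp
      rw [this]; exact V.add_mem hp hq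
    | monomial n c =>
      have : (monomial n c).toContinuousMapOn K = c • (Xc K) ^ n := by
        ext x
        simp [eval_monomial]
      rw [this]; exact V.smul_mem _ (hmono n)
  -- Stone–Weierstrass
  have hSW := ContinuousMap.subalgebra_topologicalClosure_eq_top_of_separatesPoints
    (polynomialFunctions K) (polynomialFunctions_separatesPoints K)
  rw [dense_iff_closure_eq, ← Submodule.topologicalClosure_coe]
  refine Set.eq_univ_of_univ_subset ?_
  have h2 : (polynomialFunctions K : Set C(K, ℝ)) ⊆ (V : Set C(K, ℝ)) := by
    intro g hg
    rw [polynomialFunctions_coe] at hg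
    obtain ⟨q, rfl⟩ := hg
    exact hpolyV q
  calc (Set.univ : Set C(K, ℝ))
      = ((polynomialFunctions K).topologicalClosure : Set C(K, ℝ)) := by rw [hSW]; rfl
    _ = closure (polynomialFunctions K : Set C(K, ℝ)) := Subalgebra.topologicalClosure_coe _
    _ ⊆ closure (V : Set C(K, ℝ)) := closure_mono h2
    _ = (V : Set C(K, ℝ)) := hVclosed.closure_eq
/-- Easy direction: if `ψ` is a polynomial, density fails on `[0,1]`. -/
lemma easy_direction (ψ : ℝ → ℝ) (hψ : Continuous ψ) (p : Polynomial ℝ)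
    (hp : ∀ x : ℝ, ψ x = p.eval x) :
    ¬ Dense (↑(Submodule.span ℝ
      {g : C((Set.Icc (0:ℝ) 1), ℝ) | ∃ a b : ℝ, ∀ x : (Set.Icc (0:ℝ) 1), g x = ψ (a * ↑x + b)})
      : Set C((Set.Icc (0:ℝ) 1), ℝ)) := by
  set K : Set ℝ := Set.Icc (0:ℝ) 1 with hKdef
  haveI : CompactSpace K := isCompact_iff_compactSpace.mp isCompact_Icc
  intro hdense
  set n := p.natDegree with hn
  set L := (Polynomial.toContinuousMapOnAlgHom K).toLinearMap with hL
  set W : Submodule ℝ C(K, ℝ) := Submodule.map L (Polynomial.degreeLT ℝ (n + 1)) with hW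
  haveI hfd : FiniteDimensional ℝ (Polynomial.degreeLT ℝ (n + 1)) :=
    Module.Finite.equiv (Polynomial.degreeLTEquiv ℝ (n + 1)).symm
  haveI : FiniteDimensional ℝ W := Module.Finite.map _ _
  have hWclosed : IsClosed (W : Set C(K, ℝ)) := Submodule.closed_of_finiteDimensional W
  have hsub : Submodule.span ℝ
      {g : C(K, ℝ) | ∃ a b : ℝ, ∀ x : K, g x = ψ (a * ↑x + b)} ≤ W := by
    rw [Submodule.span_le]
    rintro g ⟨a, b, hg⟩
    refine ⟨p.comp (Polynomial.C a * Polynomial.X + Polynomial.C b), ?_, ?_⟩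
    · rw [SetLike.mem_coe, Polynomial.mem_degreeLT]
      have h1 : (Polynomial.C a * Polynomial.X + Polynomial.C b).natDegree ≤ 1 := by
        apply (Polynomial.natDegree_add_le _ _).trans
        simp only [max_le_iff]
        constructor
        · exact (Polynomial.natDegree_C_mul_le _ _).trans (by simp)
        · simp
      have h2 : (p.comp (Polynomial.C a * Polynomial.X + Polynomial.C b)).natDegree ≤ n := by
        apply Polynomial.natDegree_comp_le.trans
        calc p.natDegree * (Polynomial.C a * Polynomial.X + Polynomial.C b).natDegree
            ≤ p.natDegree * 1 := Nat.mul_le_mul_left _ h1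
          _ = n := by rw [mul_one]
      calc (p.comp (Polynomial.C a * Polynomial.X + Polynomial.C b)).degree
          ≤ ((p.comp (Polynomial.C a * Polynomial.X + Polynomial.C b)).natDegree : WithBot ℕ) :=
            Polynomial.degree_le_natDegree
        _ ≤ (n : WithBot ℕ) := by exact_mod_cast h2
        _ < ((n + 1 : ℕ) : WithBot ℕ) := by exact_mod_cast Nat.lt_succ_self n
    · ext x
      simp only [hL, AlgHom.toLinearMap_apply, Polynomial.toContinuousMapOnAlgHom_apply,
        Polynomial.toContinuousMapOn_apply, Polynomial.toContinuousMap_apply,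
        Polynomial.eval_comp]
      rw [hg x, hp]
      simp
  have hall : ∀ f : C(K, ℝ), f ∈ W := by
    intro f
    have h1 : closure (↑(Submodule.span ℝ
        {g : C(K, ℝ) | ∃ a b : ℝ, ∀ x : K, g x = ψ (a * ↑x + b)}) : Set C(K, ℝ))
        = Set.univ := dense_iff_closure_eq.mp hdense
    have h2 : f ∈ closure (↑(Submodule.span ℝ
        {g : C(K, ℝ) | ∃ a b : ℝ, ∀ x : K, g x = ψ (a * ↑x + b)}) : Set C(K, ℝ)) := by
      rw [h1]; exact Set.mem_univ f
    have h3 := closure_mono (SetLike.coe_subset_coe.mpr hsub) h2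
    rwa [hWclosed.closure_eq] at h3
  obtain ⟨q, hq, hLq⟩ := hall ((Polynomial.X ^ (n + 1) : Polynomial ℝ).toContinuousMapOn K)
  rw [SetLike.mem_coe, Polynomial.mem_degreeLT] at hq
  have hQne : (Polynomial.X ^ (n + 1) - q : Polynomial ℝ) ≠ 0 := by
    intro h0
    rw [sub_eq_zero] at h0
    rw [← h0, Polynomial.degree_X_pow] at hq
    exact lt_irrefl _ hq
  apply hQne
  apply Polynomial.eq_zero_of_infinite_isRoot
  apply Set.Infinite.mono (s := K) ?_ (Set.Icc_infinite (by norm_num : (0:ℝ) < 1))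
  intro x hx
  have h4 := congrArg (fun f : C(K, ℝ) => f ⟨x, hx⟩) hLq
  simp only [hL, AlgHom.toLinearMap_apply, Polynomial.toContinuousMapOnAlgHom_apply,
    Polynomial.toContinuousMapOn_apply, Polynomial.toContinuousMap_apply] at h4
  simp only [Set.mem_setOf_eq, Polynomial.IsRoot, Polynomial.eval_sub, Polynomial.eval_pow,
    Polynomial.eval_X]
  rw [h4]
  simp
end UAT
end UAT

/-- Let ψ : ℝ → ℝ be continuous. The linear span of the family of ridge
functions {x ↦ ψ(a·x + b) : a, b ∈ ℝ} is dense in C(K) with respect to the uniform norm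
for every compact set K ⊆ ℝ if and only if ψ is not a polynomial. -/
theorem stmt_0 (ψ : ℝ → ℝ) (hψ : Continuous ψ) :
    (∀ K : Set ℝ, IsCompact K →
      Dense (↑(Submodule.span ℝ
        {g : C(K, ℝ) | ∃ a b : ℝ, ∀ x : K, g x = ψ (a * ↑x + b)}) : Set C(K, ℝ))) ↔
    ¬ ∃ p : Polynomial ℝ, ∀ x : ℝ, ψ x = p.eval x := by
  constructor
  · rintro hdense ⟨p, hp⟩
    exact UAT.easy_direction ψ hψ p hp (hdense (Set.Icc (0:ℝ) 1) isCompact_Icc)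
  · intro hnp K hK
    exact UAT.hard_direction ψ hψ hnp K hK
end

section
/- Let σ(t) = 1/(1 + exp(−t)) be the logistic sigmoid, let x₁ < x₂ < ⋯ < x_M be distinct real numbers and let y₁, …, y_M ∈ ℝ be arbitrary target values. Then there exist internal weights a₁, …, a_M ∈ ℝ, biases b₁, …, b_M ∈ ℝ and external weights w₁, …, w_M ∈ ℝ such that Σ_{i=1}^{M} w_i σ(a_i x_j + b_i) = y_j for every j = 1, …, M; that is, a single-hidden-layer network with M sigmoid neurons exactly interpolates any M data points with distinct abscissae. -/
open Filter Matrix Topology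

noncomputable def sigm (t : ℝ) : ℝ := 1 / (1 + Real.exp (-t))

lemma sigm_atTop : Tendsto sigm atTop (𝓝 1) := by
  have h1 : Tendsto (fun t : ℝ => 1 + Real.exp (-t)) atTop (𝓝 (1 + 0)) :=
    tendsto_const_nhds.add (Real.tendsto_exp_atBot.comp tendsto_neg_atTop_atBot)
  have := (tendsto_const_nhds (x := (1:ℝ))).div h1 (by norm_num)
  rw [show sigm = fun t => (1 + Real.exp (-t))⁻¹ from funext fun t => by simp [sigm]]
  simpa [Pi.div_def] using this

lemma sigm_atBot : Tendsto sigm atBot (𝓝 0) := by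
  have h1 : Tendsto (fun t : ℝ => 1 + Real.exp (-t)) atBot atTop := by
    apply tendsto_atTop_add_const_left
    exact Real.tendsto_exp_atTop.comp tendsto_neg_atBot_atTop
  exact h1.inv_tendsto_atTop.congr fun t => by simp [sigm, one_div]

/-- Let σ be the logistic sigmoid, x₁ < ⋯ < x_M distinct reals and y₁,…,y_M
arbitrary target values. Then there exist internal weights aᵢ, biases bᵢ and external
weights wᵢ such that Σᵢ wᵢ σ(aᵢ xⱼ + bᵢ) = yⱼ for every j: a single-hidden-layer network
with M sigmoid neurons exactly interpolates any M data points with distinct abscissae. -/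
theorem stmt_3 (M : ℕ) (x y : Fin M → ℝ) (hx : StrictMono x) :
    ∃ a b w : Fin M → ℝ, ∀ j : Fin M,
      ∑ i : Fin M, w i * (1 / (1 + Real.exp (-(a i * x j + b i)))) = y j := by
  -- matrix of activations at scale t
  set S : ℝ → Matrix (Fin M) (Fin M) ℝ :=
    fun t => Matrix.of fun j i => sigm (t * (x j - x i)) with hS
  -- limit matrix
  set L : Matrix (Fin M) (Fin M) ℝ :=
    Matrix.of fun j i => if i < j then 1 else if i = j then 1/2 else 0 with hL
  have hLdet : L.det = (1/2 : ℝ) ^ M := by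
    rw [Matrix.det_of_lowerTriangular L (by
      intro i j hij
      have h' : i < j := hij
      simp [hL, asymm h', h'.ne'])]
    simp [hL]
  have hentry : ∀ j i : Fin M,
      Tendsto (fun t => S t j i) atTop (𝓝 (L j i)) := by
    intro j i
    rcases lt_trichotomy i j with h | h | h
    · have hx' : x i < x j := hx h
      have : Tendsto (fun t : ℝ => t * (x j - x i)) atTop atTop :=
        Tendsto.atTop_mul_const (by linarith) tendsto_id
      simpa [hS, hL, h, Function.comp_def] using sigm_atTop.comp this
    · subst h
      have he : (fun t : ℝ => S t i i) = fun _ => (1/2 : ℝ) := by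
        funext t
        simp [hS, sigm, Real.exp_zero]
        norm_num
      rw [he]
      simpa [hL] using (tendsto_const_nhds : Tendsto (fun _ : ℝ => (1/2:ℝ)) atTop _)
    · have hx' : x j < x i := hx h
      have : Tendsto (fun t : ℝ => t * (x j - x i)) atTop atBot :=
        Tendsto.atTop_mul_const_of_neg (by linarith) tendsto_id
      simpa [hS, hL, h.not_gt, h.ne', Function.comp_def] using sigm_atBot.comp this
  have hdet : Tendsto (fun t => (S t).det) atTop (𝓝 L.det) := by
    have hmat : Tendsto S atTop (𝓝 L) := by
      apply tendsto_pi_nhds.mpr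
      intro j
      rw [tendsto_pi_nhds]
      intro i
      exact hentry j i
    exact (Continuous.matrix_det continuous_id).continuousAt.tendsto.comp hmat
  have hne : ∃ t : ℝ, (S t).det ≠ 0 := by
    have : ∀ᶠ t in atTop, (S t).det ≠ 0 :=
      hdet.eventually_ne (by rw [hLdet]; positivity)
    exact this.exists
  obtain ⟨t, ht⟩ := hne
  refine ⟨fun _ => t, fun i => -t * x i, (S t)⁻¹ *ᵥ y, fun j => ?_⟩
  have key : (S t) *ᵥ ((S t)⁻¹ *ᵥ y) = y := by
    rw [Matrix.mulVec_mulVec, Matrix.mul_nonsing_inv _ (isUnit_iff_ne_zero.mpr ht),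
      Matrix.one_mulVec]
  have := congrFun key j
  rw [Matrix.mulVec, dotProduct] at this
  rw [← this]
  apply Finset.sum_congr rfl
  intro i _
  rw [mul_comm]
  congr 1
  simp [hS, sigm, mul_sub]
  ring_nf
end

section
/- Let σ(t) = 1/(1 + exp(−t)) be the logistic sigmoid and let x₁ < x₂ < ⋯ < x_M be distinct real numbers. Then the set of parameter vectors (a₁,…,a_M, b₁,…,b_M) ∈ ℝ^M × ℝ^M for which the M × M collocation matrix S with entries S_{ji} = σ(a_i x_j + b_i) is singular (det S = 0) has Lebesgue measure zero in ℝ^{2M}. Consequently, if internal weights and biases are drawn from any probability distribution on ℝ^{2M} that is absolutely continuous with respect to Lebesgue measure, the interpolation system S·w = y is uniquely solvable with probability 1. -/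
open MeasureTheory Matrix Filter Topology

/-! Auxiliary lemmas -/

private lemma sig_analytic {E : Type*} [NormedAddCommGroup E] [NormedSpace ℝ E]
    {f : E → ℝ} (hf : AnalyticOnNhd ℝ f Set.univ) :
    AnalyticOnNhd ℝ (fun z => 1 / (1 + Real.exp (-(f z)))) Set.univ := by
  have h1 : AnalyticOnNhd ℝ (fun z => 1 + Real.exp (-(f z))) Set.univ :=
    analyticOnNhd_const.add (by simpa using hf.neg.rexp)
  exact analyticOnNhd_const.div h1 fun z _ => by positivity

private lemma null_of_analytic_1d {h : ℝ → ℝ} (hh : AnalyticOnNhd ℝ h Set.univ)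
    {t0 : ℝ} (ht0 : h t0 ≠ 0) : volume {t : ℝ | h t = 0} = 0 := by
  apply measure_null_of_locally_null
  intro t ht
  rcases (hh t (Set.mem_univ t)).eventually_eq_zero_or_eventually_ne_zero with H | H
  · exact absurd (hh.eqOn_zero_of_preconnected_of_eventuallyEq_zero isPreconnected_univ
      (Set.mem_univ t) H (Set.mem_univ t0)) ht0
  · rw [eventually_nhdsWithin_iff] at H
    refine ⟨_ ∩ {t : ℝ | h t = 0},
      Filter.inter_mem (mem_nhdsWithin_of_mem_nhds H) self_mem_nhdsWithin, ?_⟩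
    · refine measure_mono_null (fun z hz => ?_) (measure_singleton (μ := volume) t)
      rcases hz with ⟨h1, h2⟩
      by_contra hzt
      exact h1 (by simpa using hzt) h2


private lemma null_of_analytic_pi : ∀ (n : ℕ) (f : (Fin n → ℝ) → ℝ),
    AnalyticOnNhd ℝ f Set.univ → (∃ z, f z ≠ 0) →
    volume {z : Fin n → ℝ | f z = 0} = 0 := by
  intro n
  induction n with
  | zero =>
    rintro f hf ⟨z0, hz0⟩
    have : {z : Fin 0 → ℝ | f z = 0} = ∅ := by
      ext z
      simp only [Set.mem_setOf_eq, Set.mem_empty_iff_false, iff_false]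
      rw [Subsingleton.elim z z0]; exact hz0
    simp [this]
  | succ n IH =>
    rintro f hf ⟨z0, hz0⟩
    set g : ℝ × (Fin n → ℝ) → ℝ := fun p => f (Fin.cons p.1 p.2) with hgdef
    have hcons : AnalyticOnNhd ℝ
        (fun p : ℝ × (Fin n → ℝ) => (Fin.cons p.1 p.2 : Fin (n+1) → ℝ)) Set.univ := by
      apply AnalyticOnNhd.pi
      intro i
      induction i using Fin.cases with
      | zero =>
        simp only [Fin.cons_zero]
        exact analyticOnNhd_fst
      | succ j =>
        simp only [Fin.cons_succ]
        exact ((ContinuousLinearMap.proj j).comp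
          (ContinuousLinearMap.snd ℝ ℝ (Fin n → ℝ))).analyticOnNhd _
    have hgan : AnalyticOnNhd ℝ g Set.univ := hf.comp hcons (Set.mapsTo_univ _ _)
    have hgcont : Continuous g := by
      rw [← continuousOn_univ]; exact hgan.continuousOn
    set e := MeasurableEquiv.piFinSuccAbove (fun _ : Fin (n+1) => ℝ) 0 with hedef
    have hmp : MeasurePreserving e :=
      MeasureTheory.volume_preserving_piFinSuccAbove (fun _ : Fin (n+1) => ℝ) 0
    have key : ∀ z : Fin (n+1) → ℝ, g (e z) = f z := by
      intro z
      show f _ = f z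
      congr 1
      ext i
      induction i using Fin.cases with
      | zero =>
        rw [Fin.cons_zero]
        rfl
      | succ j =>
        rw [Fin.cons_succ]
        show z ((0 : Fin (n+1)).succAbove j) = z j.succ
        rw [Fin.zero_succAbove]
    have hS' : MeasurableSet {p : ℝ × (Fin n → ℝ) | g p = 0} :=
      measurableSet_eq_fun hgcont.measurable measurable_const
    have hset : {z : Fin (n+1) → ℝ | f z = 0} = e ⁻¹' {p | g p = 0} := by
      ext z
      simp only [Set.mem_setOf_eq, Set.mem_preimage, key z]
    rw [hset, hmp.measure_preimage hS'.nullMeasurableSet]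
    -- Fubini
    have hbad : volume {t : ℝ | g (t, (e z0).2) = 0} = 0 := by
      apply null_of_analytic_1d (h := fun t => g (t, (e z0).2))
      · exact hgan.comp (analyticOnNhd_id.prod analyticOnNhd_const) (Set.mapsTo_univ _ _)
      · show g ((e z0).1, (e z0).2) ≠ 0
        rw [show ((e z0).1, (e z0).2) = e z0 from rfl, key z0]
        exact hz0
    have hsec : ∀ᵐ t : ℝ, volume (Prod.mk t ⁻¹' {p : ℝ × (Fin n → ℝ) | g p = 0}) = 0 := by
      have := (measure_eq_zero_iff_ae_notMem (μ := volume)).mp hbad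
      filter_upwards [this] with t ht
      have : Prod.mk t ⁻¹' {p : ℝ × (Fin n → ℝ) | g p = 0} = {z | g (t, z) = 0} := rfl
      rw [this]
      apply IH (fun z => g (t, z))
      · exact hgan.comp (analyticOnNhd_const.prod analyticOnNhd_id) (Set.mapsTo_univ _ _)
      · exact ⟨(e z0).2, ht⟩
    have : (volume : Measure (ℝ × (Fin n → ℝ))) {p | g p = 0}
        = ∫⁻ t, volume (Prod.mk t ⁻¹' {p : ℝ × (Fin n → ℝ) | g p = 0}) := by
      rw [Measure.volume_eq_prod, Measure.prod_apply hS']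
    rw [this, lintegral_congr_ae (g := fun _ => 0) hsec, lintegral_zero]

private lemma exists_nonsing (M : ℕ) (x : Fin M → ℝ) (hx : StrictMono x) :
    ∃ p : (Fin M → ℝ) × (Fin M → ℝ),
      (Matrix.of fun j i : Fin M =>
        1 / (1 + Real.exp (-(p.1 i * x j + p.2 i)))).det ≠ 0 := by
  classical
  set c : Fin M → ℝ := fun i =>
    if (i : ℕ) = 0 then x i - 1
    else (x ⟨(i : ℕ) - 1, Nat.lt_of_le_of_lt (Nat.sub_le _ _) i.isLt⟩ + x i) / 2 with hc
  have hposneg : ∀ i j : Fin M, (i ≤ j → 0 < x j - c i) ∧ (j < i → x j - c i < 0) := by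
    intro i j
    constructor
    · intro hij
      by_cases h : (i : ℕ) = 0
      · have hci : c i = x i - 1 := by simp [hc, h]
        have := hx.monotone hij
        rw [hci]; linarith
      · have hlt : (⟨(i : ℕ) - 1, Nat.lt_of_le_of_lt (Nat.sub_le _ _) i.isLt⟩ : Fin M) < i := by
          rw [Fin.lt_def]; simp; omega
        have h1 := hx hlt
        have h2 := hx.monotone hij
        have hci : c i = (x ⟨(i : ℕ) - 1, Nat.lt_of_le_of_lt (Nat.sub_le _ _) i.isLt⟩ + x i) / 2 := by
          simp [hc, h]
        rw [hci]; linarith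
    · intro hji
      have h : (i : ℕ) ≠ 0 := by
        have := hji
        rw [Fin.lt_def] at this
        omega
      have hle : j ≤ (⟨(i : ℕ) - 1, Nat.lt_of_le_of_lt (Nat.sub_le _ _) i.isLt⟩ : Fin M) := by
        rw [Fin.le_def]; simp
        rw [Fin.lt_def] at hji; omega
      have h1 := hx.monotone hle
      have h2 : x (⟨(i : ℕ) - 1, Nat.lt_of_le_of_lt (Nat.sub_le _ _) i.isLt⟩ : Fin M) < x i := by
        apply hx
        rw [Fin.lt_def]; simp; omega
      have hci : c i = (x ⟨(i : ℕ) - 1, Nat.lt_of_le_of_lt (Nat.sub_le _ _) i.isLt⟩ + x i) / 2 := by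
        simp [hc, h]
      rw [hci]; linarith
  -- limits of the sigmoid
  have hσ1 : ∀ d : ℝ, 0 < d →
      Tendsto (fun a : ℝ => 1 / (1 + Real.exp (-(a * d)))) atTop (𝓝 1) := by
    intro d hd
    have h1 : Tendsto (fun a : ℝ => a * d) atTop atTop :=
      Tendsto.atTop_mul_const hd tendsto_id
    have h2 : Tendsto (fun a : ℝ => Real.exp (-(a * d))) atTop (𝓝 0) := by
      have := Real.tendsto_exp_atBot.comp (tendsto_neg_atBot_iff.mpr h1)
      exact this
    have h3 : Tendsto (fun a : ℝ => 1 + Real.exp (-(a * d))) atTop (𝓝 1) := by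
      have := h2.const_add (1 : ℝ)
      simpa using this
    have h4 : Tendsto (fun a : ℝ => 1 / (1 + Real.exp (-(a * d)))) atTop (𝓝 (1 / 1)) :=
      Tendsto.div tendsto_const_nhds h3 (by norm_num)
    simpa using h4
  have hσ0 : ∀ d : ℝ, d < 0 →
      Tendsto (fun a : ℝ => 1 / (1 + Real.exp (-(a * d)))) atTop (𝓝 0) := by
    intro d hd
    have h1 : Tendsto (fun a : ℝ => a * d) atTop atBot :=
      Tendsto.atTop_mul_const_of_neg hd tendsto_id
    have h2 : Tendsto (fun a : ℝ => Real.exp (-(a * d))) atTop atTop := by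
      have := Real.tendsto_exp_atTop.comp (tendsto_neg_atTop_iff.mpr h1)
      exact this
    have h3 : Tendsto (fun a : ℝ => 1 + Real.exp (-(a * d))) atTop atTop :=
      tendsto_atTop_add_const_left _ 1 h2
    have := h3.inv_tendsto_atTop
    simpa [one_div, Pi.inv_def] using this
  -- the limit matrix
  set L : Matrix (Fin M) (Fin M) ℝ := Matrix.of fun j i => if i ≤ j then (1:ℝ) else 0 with hL
  have hLdet : L.det = 1 := by
    rw [Matrix.det_of_lowerTriangular L]
    · simp [hL]
    · intro a b hab
      simp only [hL, Matrix.of_apply]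
      rw [if_neg]
      exact fun hba => absurd (lt_of_le_of_lt hba hab) (lt_irrefl _)
  have hmat : Tendsto (fun a : ℝ => (Matrix.of fun j i : Fin M =>
      1 / (1 + Real.exp (-((fun _ : Fin M => a) i * x j + (fun i => -(a * c i)) i))))) atTop (𝓝 L) := by
    refine tendsto_pi_nhds.mpr ?_
    intro j
    rw [tendsto_pi_nhds]
    intro i
    have harg : ∀ a : ℝ, a * x j + -(a * c i) = a * (x j - c i) := by intro a; ring
    by_cases hij : i ≤ j
    · have hd := (hposneg i j).1 hij
      have := hσ1 _ hd
      have hLji : L j i = 1 := by simp [hL, hij]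
      rw [hLji]
      exact this.congr fun a => by
        show 1 / (1 + Real.exp (-(a * (x j - c i)))) = 1 / (1 + Real.exp (-(a * x j + -(a * c i))))
        ring_nf
    · have hd := (hposneg i j).2 (lt_of_not_ge hij)
      have := hσ0 _ hd
      have hLji : L j i = 0 := by simp [hL, hij]
      rw [hLji]
      exact this.congr fun a => by
        show 1 / (1 + Real.exp (-(a * (x j - c i)))) = 1 / (1 + Real.exp (-(a * x j + -(a * c i))))
        ring_nf
  have hdet : Tendsto (fun a : ℝ => (Matrix.of fun j i : Fin M =>
      1 / (1 + Real.exp (-((fun _ : Fin M => a) i * x j + (fun i => -(a * c i)) i)))).det)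
      atTop (𝓝 1) := by
    have hcont : Continuous (Matrix.det : Matrix (Fin M) (Fin M) ℝ → ℝ) :=
      Continuous.matrix_det continuous_id
    have := (hcont.tendsto L).comp hmat
    rwa [hLdet] at this
  have hev : ∀ᶠ a : ℝ in atTop, (Matrix.of fun j i : Fin M =>
      1 / (1 + Real.exp (-((fun _ : Fin M => a) i * x j + (fun i => -(a * c i)) i)))).det ≠ 0 :=
    hdet.eventually_ne one_ne_zero
  obtain ⟨a, ha⟩ := hev.exists
  exact ⟨(fun _ => a, fun i => -(a * c i)), ha⟩

/-- Let σ be the logistic sigmoid and x₁ < ⋯ < x_M distinct reals. The set of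
parameter vectors (a, b) ∈ ℝ^M × ℝ^M for which the M × M collocation matrix
S_{ji} = σ(aᵢ xⱼ + bᵢ) is singular has Lebesgue measure zero in ℝ^{2M}. Consequently, if
internal weights and biases are drawn from any probability distribution absolutely
continuous w.r.t. Lebesgue measure, the interpolation system S·w = y is uniquely solvable
with probability 1. -/
theorem stmt_4 (M : ℕ) (x : Fin M → ℝ) (hx : StrictMono x) :
    volume {p : (Fin M → ℝ) × (Fin M → ℝ) |
      (Matrix.of fun j i : Fin M =>
        1 / (1 + Real.exp (-(p.1 i * x j + p.2 i)))).det = 0} = 0 ∧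
    ∀ μ : Measure ((Fin M → ℝ) × (Fin M → ℝ)), IsProbabilityMeasure μ →
      μ ≪ volume →
      μ {p : (Fin M → ℝ) × (Fin M → ℝ) |
        ∀ y : Fin M → ℝ, ∃! w : Fin M → ℝ,
          (Matrix.of fun j i : Fin M =>
            1 / (1 + Real.exp (-(p.1 i * x j + p.2 i)))) *ᵥ w = y} = 1 := by
  classical
  let F : (Fin M → ℝ) × (Fin M → ℝ) → ℝ := fun p =>
    (Matrix.of fun j i : Fin M => 1 / (1 + Real.exp (-(p.1 i * x j + p.2 i)))).det
  have hFan : AnalyticOnNhd ℝ F Set.univ := by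
    have hFeq : F = fun p => ∑ σ : Equiv.Perm (Fin M),
        ((Equiv.Perm.sign σ : ℤ) : ℝ) *
          ∏ i : Fin M, 1 / (1 + Real.exp (-(p.1 i * x (σ i) + p.2 i))) := by
      funext p
      show (Matrix.of fun j i : Fin M =>
        1 / (1 + Real.exp (-(p.1 i * x j + p.2 i)))).det = _
      rw [Matrix.det_apply']
      rfl
    rw [hFeq]
    apply Finset.analyticOnNhd_fun_sum
    intro σ _
    apply AnalyticOnNhd.mul analyticOnNhd_const
    apply Finset.analyticOnNhd_fun_prod
    intro i _
    apply sig_analytic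
    have h1 : AnalyticOnNhd ℝ (fun p : (Fin M → ℝ) × (Fin M → ℝ) => p.1 i) Set.univ :=
      ((ContinuousLinearMap.proj i).comp
        (ContinuousLinearMap.fst ℝ (Fin M → ℝ) (Fin M → ℝ))).analyticOnNhd _
    have h2 : AnalyticOnNhd ℝ (fun p : (Fin M → ℝ) × (Fin M → ℝ) => p.2 i) Set.univ :=
      ((ContinuousLinearMap.proj i).comp
        (ContinuousLinearMap.snd ℝ (Fin M → ℝ) (Fin M → ℝ))).analyticOnNhd _
    exact (h1.mul analyticOnNhd_const).add h2
  have hFcont : Continuous F := by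
    rw [← continuousOn_univ]; exact hFan.continuousOn
  -- transfer to a pi space
  let g : (Fin (M + M) → ℝ) → ℝ :=
    fun q => F (fun i => q (Fin.castAdd M i), fun i => q (Fin.natAdd M i))
  have hgan : AnalyticOnNhd ℝ g Set.univ := by
    apply hFan.comp _ (Set.mapsTo_univ _ _)
    apply AnalyticOnNhd.prod
    · exact AnalyticOnNhd.pi fun i =>
        (ContinuousLinearMap.proj (R := ℝ) (φ := fun _ : Fin (M+M) => ℝ)
          (Fin.castAdd M i)).analyticOnNhd _
    · exact AnalyticOnNhd.pi fun i =>
        (ContinuousLinearMap.proj (R := ℝ) (φ := fun _ : Fin (M+M) => ℝ)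
          (Fin.natAdd M i)).analyticOnNhd _
  have hgcont : Continuous g := by
    rw [← continuousOn_univ]; exact hgan.continuousOn
  obtain ⟨p0, hp0⟩ := exists_nonsing M x hx
  have hg0 : volume {q : Fin (M + M) → ℝ | g q = 0} = 0 := by
    apply null_of_analytic_pi _ _ hgan
    refine ⟨Fin.append p0.1 p0.2, ?_⟩
    show F (fun i => Fin.append p0.1 p0.2 (Fin.castAdd M i),
      fun i => Fin.append p0.1 p0.2 (Fin.natAdd M i)) ≠ 0
    have ha : (fun i => Fin.append p0.1 p0.2 (Fin.castAdd M i)) = p0.1 :=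
      funext fun i => Fin.append_left _ _ _
    have hb : (fun i => Fin.append p0.1 p0.2 (Fin.natAdd M i)) = p0.2 :=
      funext fun i => Fin.append_right _ _ _
    rw [ha, hb]
    exact hp0
  let e2 := MeasurableEquiv.sumPiEquivProdPi (fun _ : Fin M ⊕ Fin M => ℝ)
  let e1 := MeasurableEquiv.piCongrLeft (fun _ : Fin (M + M) => ℝ) finSumFinEquiv
  let E := e2.symm.trans e1
  have hmp : MeasurePreserving E := by
    have m1 := MeasureTheory.volume_measurePreserving_piCongrLeft
      (fun _ : Fin (M + M) => ℝ) finSumFinEquiv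
    have m2 := MeasureTheory.volume_measurePreserving_sumPiEquivProdPi_symm
      (fun _ : Fin M ⊕ Fin M => ℝ)
    exact m1.comp m2
  have hkey : ∀ p : (Fin M → ℝ) × (Fin M → ℝ), g (E p) = F p := by
    intro p
    have hcast : ∀ i : Fin M, E p (Fin.castAdd M i) = p.1 i := by
      intro i
      show e1 (e2.symm p) (Fin.castAdd M i) = p.1 i
      rw [← finSumFinEquiv_apply_left (i := i)]
      rw [MeasurableEquiv.coe_piCongrLeft, Equiv.piCongrLeft_apply_apply]
      rfl
    have hnat : ∀ i : Fin M, E p (Fin.natAdd M i) = p.2 i := by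
      intro i
      show e1 (e2.symm p) (Fin.natAdd M i) = p.2 i
      rw [← finSumFinEquiv_apply_right (i := i)]
      rw [MeasurableEquiv.coe_piCongrLeft, Equiv.piCongrLeft_apply_apply]
      rfl
    show F (fun i => E p (Fin.castAdd M i), fun i => E p (Fin.natAdd M i)) = F p
    rw [funext hcast, funext hnat]
  have h1 : volume {p : (Fin M → ℝ) × (Fin M → ℝ) | F p = 0} = 0 := by
    have hset : {p : (Fin M → ℝ) × (Fin M → ℝ) | F p = 0} = E ⁻¹' {q | g q = 0} := by
      ext p
      simp only [Set.mem_setOf_eq, Set.mem_preimage, hkey p]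
    rw [hset, hmp.measure_preimage
      (measurableSet_eq_fun hgcont.measurable measurable_const).nullMeasurableSet]
    exact hg0
  refine ⟨h1, ?_⟩
  intro μ hμ hac
  have hZmeas : MeasurableSet {p : (Fin M → ℝ) × (Fin M → ℝ) | F p = 0} :=
    measurableSet_eq_fun hFcont.measurable measurable_const
  have hμZ : μ {p : (Fin M → ℝ) × (Fin M → ℝ) | F p = 0} = 0 := hac h1
  have hcompl : μ {p : (Fin M → ℝ) × (Fin M → ℝ) | F p = 0}ᶜ = 1 := by
    rw [measure_compl hZmeas (measure_ne_top μ _), hμZ, measure_univ]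
    simp
  have hsub : {p : (Fin M → ℝ) × (Fin M → ℝ) | F p = 0}ᶜ ⊆
      {p : (Fin M → ℝ) × (Fin M → ℝ) |
        ∀ y : Fin M → ℝ, ∃! w : Fin M → ℝ,
          (Matrix.of fun j i : Fin M =>
            1 / (1 + Real.exp (-(p.1 i * x j + p.2 i)))) *ᵥ w = y} := by
    intro p hp
    simp only [Set.mem_compl_iff, Set.mem_setOf_eq] at hp
    intro y
    set S := Matrix.of fun j i : Fin M =>
      1 / (1 + Real.exp (-(p.1 i * x j + p.2 i))) with hS
    have hdet : IsUnit S.det := isUnit_iff_ne_zero.mpr hp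
    refine ⟨S⁻¹ *ᵥ y, ?_, ?_⟩
    · show S *ᵥ (S⁻¹ *ᵥ y) = y
      rw [Matrix.mulVec_mulVec, Matrix.mul_nonsing_inv _ hdet, Matrix.one_mulVec]
    · intro w hw
      have h2 : S⁻¹ *ᵥ (S *ᵥ w) = S⁻¹ *ᵥ y := by rw [hw]
      rwa [Matrix.mulVec_mulVec, Matrix.nonsing_inv_mul _ hdet, Matrix.one_mulVec] at h2
  exact le_antisymm prob_le_one (le_trans (le_of_eq hcompl.symm) (measure_mono hsub))
end

section
/- Let f(x) = cos(20x) on [−1,1] and let p_M be the Lagrange interpolating polynomial of f at the M Chebyshev nodes. Since f extends to an entire function on ℂ, the convergence is faster than any geometric rate: for every ρ > 1, ρ^M · sup_{x ∈ [−1,1]} |p_M(x) − f(x)| → 0 as M → ∞. -/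
open scoped Real

/-- The M Chebyshev nodes on [-1,1]: x_k = cos((2k-1)π/(2M)), k = 1,…,M
(indexed here by k = 0,…,M-1, so x_k = cos((2k+1)π/(2M))). -/
noncomputable def chebNodes (M : ℕ) : Fin M → ℝ :=
  fun k => Real.cos ((2 * (k : ℝ) + 1) * π / (2 * M))

/-- The Lagrange interpolating polynomial of f at the M Chebyshev nodes. -/
noncomputable def chebInterp (M : ℕ) (f : ℝ → ℝ) : Polynomial ℝ :=
  Lagrange.interpolate Finset.univ (chebNodes M) (fun k => f (chebNodes M k))

section CAux
open Polynomial

lemma iteratedDeriv_polyEval (p : ℝ[X]) (n : ℕ) :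
    iteratedDeriv n (fun x => p.eval x) = fun x => (derivative^[n] p).eval x := by
  induction n with
  | zero => simp
  | succ n ih =>
    rw [iteratedDeriv_succ, ih, Function.iterate_succ_apply']
    funext x
    exact Polynomial.deriv _

lemma iterRolle : ∀ (n : ℕ) (g : ℝ → ℝ), ContDiff ℝ (⊤:ℕ∞) g →
    ∀ (z : Fin (n+1) → ℝ), StrictMono z → (∀ i, g (z i) = 0) →
    ∃ ξ ∈ Set.Icc (z 0) (z (Fin.last n)), iteratedDeriv n g ξ = 0 := by
  intro n
  induction n with
  | zero =>
    intro g _ z _ hz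
    exact ⟨z 0, ⟨le_refl _, le_refl _⟩, by simpa using hz 0⟩
  | succ n ih =>
    intro g hg z hzm hz
    have hR : ∀ i : Fin (n+1), ∃ c ∈ Set.Ioo (z i.castSucc) (z i.succ), deriv g c = 0 := by
      intro i
      refine exists_deriv_eq_zero (hzm (Fin.castSucc_lt_succ : i.castSucc < i.succ)) hg.continuous.continuousOn ?_
      rw [hz, hz]
    choose ξ hξmem hξ0 using hR
    have hξm : StrictMono ξ := by
      intro i j hij
      calc ξ i < z i.succ := (hξmem i).2
        _ ≤ z j.castSucc := hzm.monotone (Fin.succ_le_castSucc_iff.mpr hij)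
        _ < ξ j := (hξmem j).1
    have hg' : ContDiff ℝ (⊤:ℕ∞) (deriv g) := (contDiff_infty_iff_deriv.mp hg).2
    obtain ⟨ζ, hζmem, hζ⟩ := ih (deriv g) hg' ξ hξm hξ0
    refine ⟨ζ, ⟨?_, ?_⟩, by rwa [iteratedDeriv_succ']⟩
    · exact le_trans (le_of_lt (hξmem 0).1) hζmem.1
    · exact le_trans hζmem.2 (le_of_lt (hξmem (Fin.last n)).2)

lemma iteratedDeriv_sub_polyEval (f : ℝ → ℝ) (hf : ContDiff ℝ (⊤:ℕ∞) f) (q : ℝ[X]) (n : ℕ) :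
    iteratedDeriv n (fun t => f t - q.eval t) =
      fun t => iteratedDeriv n f t - (derivative^[n] q).eval t := by
  induction n with
  | zero => simp
  | succ n ih =>
    rw [iteratedDeriv_succ, ih]
    funext t
    have hdf : DifferentiableAt ℝ (iteratedDeriv n f) t :=
      (hf.differentiable_iteratedDeriv n (by exact_mod_cast ENat.coe_lt_top n)) t
    rw [deriv_fun_sub hdf (Polynomial.differentiableAt _), ← iteratedDeriv_succ,
      Polynomial.deriv, Function.iterate_succ_apply']



lemma chebNodes_mem (M : ℕ) (k : Fin M) : chebNodes M k ∈ Set.Icc (-1:ℝ) 1 :=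
  ⟨Real.neg_one_le_cos _, Real.cos_le_one _⟩

lemma chebNodes_inj (M : ℕ) : Function.Injective (chebNodes M) := by
  intro k l hkl
  have hM : (0:ℝ) < M := by exact_mod_cast k.pos
  have harg : ∀ k : Fin M, (2 * (k:ℝ) + 1) * π / (2 * M) ∈ Set.Icc 0 π := by
    intro k
    constructor
    · positivity
    · rw [div_le_iff₀ (by positivity)]
      have hk : (k:ℝ) ≤ (M:ℝ) - 1 := by
        have h2 : (k:ℝ) + 1 ≤ M := by exact_mod_cast k.2
        linarith
      nlinarith [Real.pi_pos]
  have h := Real.strictAntiOn_cos.injOn (harg k) (harg l) hkl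
  have hkl2 : (k:ℝ) = (l:ℝ) := by
    field_simp at h
    linarith
  exact Fin.ext (by exact_mod_cast hkl2)

lemma contDiff_polyEval (p : ℝ[X]) : ContDiff ℝ (⊤:ℕ∞) fun x => p.eval x := by
  induction p using Polynomial.induction_on' with
  | add p q hp hq => simpa [Polynomial.eval_add] using hp.add hq
  | monomial n a =>
    simpa [Polynomial.eval_monomial] using contDiff_const.mul (contDiff_id.pow n)

lemma cheb_err (M : ℕ) (f : ℝ → ℝ) (hf : ContDiff ℝ (⊤:ℕ∞) f) (B : ℝ) (hB : 0 ≤ B)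
    (hd : ∀ t ∈ Set.Icc (-1:ℝ) 1, |iteratedDeriv M f t| ≤ B)
    (x : ℝ) (hx : x ∈ Set.Icc (-1:ℝ) 1) :
    |(chebInterp M f).eval x - f x| ≤ B * 2 ^ M / M.factorial := by
  set p := chebInterp M f with hp
  have hinj : Set.InjOn (chebNodes M) (Finset.univ : Finset (Fin M)) :=
    (chebNodes_inj M).injOn
  have hnode : ∀ k : Fin M, p.eval (chebNodes M k) = f (chebNodes M k) := by
    intro k
    exact Lagrange.eval_interpolate_at_node _ hinj (Finset.mem_univ k)
  have hpM : derivative^[M] p = 0 := by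
    rcases eq_or_ne p 0 with h | h
    · simp [h]
    · refine Polynomial.iterate_derivative_eq_zero ?_
      have h1 := Lagrange.degree_interpolate_lt (fun k => f (chebNodes M k)) hinj
      have h2 : p.degree < (M : ℕ) := by
        simpa [hp, chebInterp] using h1
      exact (Polynomial.natDegree_lt_iff_degree_lt h).mpr h2
  set ω : ℝ[X] := ∏ k : Fin M, (X - C (chebNodes M k)) with hω
  have hωeval : ∀ t : ℝ, ω.eval t = ∏ k : Fin M, (t - chebNodes M k) := by
    intro t; simp [hω, Polynomial.eval_prod]
  have hωbound : ∀ t ∈ Set.Icc (-1:ℝ) 1, |ω.eval t| ≤ 2 ^ M := by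
    intro t ht
    rw [hωeval, Finset.abs_prod]
    calc ∏ k : Fin M, |t - chebNodes M k| ≤ ∏ _k : Fin M, (2:ℝ) := by
          refine Finset.prod_le_prod (fun k _ => abs_nonneg _) (fun k _ => ?_)
          have := chebNodes_mem M k
          rw [abs_sub_le_iff]
          constructor <;> [skip; skip] <;>
            · obtain ⟨h1, h2⟩ := ht; obtain ⟨h3, h4⟩ := this; linarith
      _ = 2 ^ M := by simp
  have hωM : derivative^[M] ω = C (M.factorial : ℝ) := by
    have hmon : ω.Monic := monic_prod_of_monic _ _ (fun k _ => monic_X_sub_C _)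
    have hdeg : ω.natDegree = M := by
      rw [hω, Polynomial.natDegree_prod_of_monic _ _ (fun k _ => monic_X_sub_C _)]
      simp
    have hd0 : (derivative^[M] ω).natDegree = 0 := by
      have := Polynomial.natDegree_iterate_derivative ω M
      omega
    have := Polynomial.eq_C_of_natDegree_le_zero hd0.le
    rw [this, Polynomial.coeff_iterate_derivative]
    have : ω.coeff (0 + M) = 1 := by
      simpa [hdeg] using hmon.coeff_natDegree
    rw [this]
    simp [Nat.descFactorial_self]
  -- case split on whether x is a node
  by_cases hxn : ∃ k : Fin M, chebNodes M k = x
  · obtain ⟨k, hk⟩ := hxn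
    rw [← hk, hnode k, sub_self, abs_zero]
    positivity
  · push_neg at hxn
    have hωx : ω.eval x ≠ 0 := by
      rw [hωeval]
      exact Finset.prod_ne_zero_iff.mpr (fun k _ => sub_ne_zero.mpr (Ne.symm (hxn k)))
    set c : ℝ := (f x - p.eval x) / ω.eval x with hc
    set Q : ℝ[X] := p + C c * ω with hQ
    set g : ℝ → ℝ := fun t => f t - Q.eval t with hg
    have hgc : ContDiff ℝ (⊤:ℕ∞) g :=
      hf.sub (contDiff_polyEval Q)
    -- zeros of g
    have hgx : g x = 0 := by
      simp only [hg, hQ, Polynomial.eval_add, Polynomial.eval_mul, Polynomial.eval_C]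
      rw [hc, div_mul_cancel₀ _ hωx]; ring
    have hgnode : ∀ k : Fin M, g (chebNodes M k) = 0 := by
      intro k
      have : ω.eval (chebNodes M k) = 0 := by
        rw [hωeval]
        exact Finset.prod_eq_zero (Finset.mem_univ k) (by ring)
      simp [hg, hQ, hnode k, this]
    set s : Finset ℝ := insert x (Finset.univ.image (chebNodes M)) with hs
    have hscard : s.card = M + 1 := by
      rw [hs, Finset.card_insert_of_notMem (by
        simp only [Finset.mem_image, Finset.mem_univ, true_and]
        exact fun ⟨k, hk⟩ => hxn k hk),
        Finset.card_image_of_injective _ (chebNodes_inj M)]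
      simp
    have hsmem : ∀ y ∈ s, y ∈ Set.Icc (-1:ℝ) 1 ∧ g y = 0 := by
      intro y hy
      rw [hs, Finset.mem_insert] at hy
      rcases hy with h | h
      · exact ⟨h ▸ hx, h ▸ hgx⟩
      · obtain ⟨k, _, hk⟩ := Finset.mem_image.mp h
        exact ⟨hk ▸ chebNodes_mem M k, hk ▸ hgnode k⟩
    set e := s.orderIsoOfFin hscard with he
    set z : Fin (M+1) → ℝ := fun i => (e i : ℝ) with hz
    have hzm : StrictMono z := fun i j hij => by
      exact_mod_cast e.strictMono hij
    have hz0 : ∀ i, g (z i) = 0 := fun i => (hsmem _ (e i).2).2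
    obtain ⟨ξ, hξmem, hξ⟩ := iterRolle M g hgc z hzm hz0
    have hξIcc : ξ ∈ Set.Icc (-1:ℝ) 1 := by
      have h0 := (hsmem _ (e 0).2).1
      have hl := (hsmem _ (e (Fin.last M)).2).1
      exact ⟨le_trans h0.1 hξmem.1, le_trans hξmem.2 hl.2⟩
    -- compute iteratedDeriv M g
    have hQM : derivative^[M] Q = C (c * M.factorial) := by
      have : derivative^[M] Q = derivative^[M] p + derivative^[M] (C c * ω) := by
        rw [hQ]
        induction M with
        | zero => simp
        | succ n ih => simp [Function.iterate_succ_apply', ih, Polynomial.derivative_add]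
      rw [this, hpM, Polynomial.iterate_derivative_C_mul, hωM]
      simp [Polynomial.C_mul]
    have hgM : iteratedDeriv M g ξ = iteratedDeriv M f ξ - c * M.factorial := by
      rw [hg, iteratedDeriv_sub_polyEval f hf Q M]
      simp [hQM]
    have hcval : c * M.factorial = iteratedDeriv M f ξ := by
      rw [hgM] at hξ; linarith
    -- final estimate
    have hcb : |c| * M.factorial ≤ B := by
      have := hd ξ hξIcc
      calc |c| * M.factorial = |c * M.factorial| := by
            rw [abs_mul, abs_of_nonneg (by positivity : (0:ℝ) ≤ (M.factorial:ℝ))]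
        _ = |iteratedDeriv M f ξ| := by rw [hcval]
        _ ≤ B := this
    have herr : p.eval x - f x = -(c * ω.eval x) := by
      have : f x - p.eval x = c * ω.eval x := by
        rw [hc]; field_simp
      linarith
    rw [herr, abs_neg, abs_mul]
    have hfac : (0:ℝ) < M.factorial := by positivity
    calc |c| * |ω.eval x| ≤ (B / M.factorial) * 2 ^ M := by
          refine mul_le_mul ?_ (hωbound x hx) (abs_nonneg _) (by positivity)
          rw [le_div_iff₀ hfac]
          exact hcb
      _ = B * 2 ^ M / M.factorial := by ring

lemma cos_iteratedDeriv (n : ℕ) :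
    iteratedDeriv n (fun t => Real.cos (20 * t)) =
      fun t => 20 ^ n * Real.cos (20 * t + n * (π / 2)) := by
  induction n with
  | zero => simp
  | succ n ih =>
    rw [iteratedDeriv_succ, ih]
    funext t
    have h1 : HasDerivAt (fun t : ℝ => 20 * t + n * (π / 2)) 20 t := by
      simpa using ((hasDerivAt_id t).const_mul (20:ℝ)).add_const ((n:ℝ) * (π / 2))
    have h2 : HasDerivAt (fun t : ℝ => Real.cos (20 * t + n * (π / 2)))
        (-Real.sin (20 * t + n * (π / 2)) * 20) t :=
      (Real.hasDerivAt_cos _).comp t h1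
    have h3 : HasDerivAt (fun t : ℝ => 20 ^ n * Real.cos (20 * t + n * (π / 2)))
        (20 ^ n * (-Real.sin (20 * t + n * (π / 2)) * 20)) t := h2.const_mul _
    rw [h3.deriv]
    have : Real.cos (20 * t + (n + 1 : ℕ) * (π / 2)) = -Real.sin (20 * t + n * (π / 2)) := by
      have : 20 * t + ((n:ℝ) + 1) * (π / 2) = (20 * t + n * (π / 2)) + π / 2 := by ring
      push_cast
      rw [this, Real.cos_add_pi_div_two]
    rw [this]
    ring

lemma cos_contDiff : ContDiff ℝ (⊤:ℕ∞) (fun t : ℝ => Real.cos (20 * t)) :=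
  Real.contDiff_cos.comp (contDiff_const.mul contDiff_id)

end CAux

/-- Let f(x) = cos(20x) on [−1,1] and p_M its Lagrange interpolant at the M
Chebyshev nodes. Since f extends to an entire function on ℂ, the convergence is faster
than any geometric rate: for every ρ > 1,
ρ^M · sup_{x ∈ [−1,1]} |p_M(x) − f(x)| → 0 as M → ∞. -/
theorem stmt_12 :
    ∀ ρ : ℝ, 1 < ρ →
      Filter.Tendsto (fun M : ℕ =>
          ρ ^ M *
            ⨆ x : Set.Icc (-1 : ℝ) 1,
              |(chebInterp M (fun t => Real.cos (20 * t))).eval (x : ℝ) -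
                Real.cos (20 * (x : ℝ))|)
        Filter.atTop (nhds 0) := by
  intro ρ hρ
  haveI : Nonempty (Set.Icc (-1:ℝ) 1) := ⟨⟨0, by norm_num⟩⟩
  set f : ℝ → ℝ := fun t => Real.cos (20 * t) with hf
  have hbound : ∀ M : ℕ, ∀ x : Set.Icc (-1:ℝ) 1,
      |(chebInterp M f).eval (x:ℝ) - f (x:ℝ)| ≤ 20 ^ M * 2 ^ M / M.factorial := by
    intro M x
    refine cheb_err M f cos_contDiff (20 ^ M) (by positivity) ?_ x x.2
    intro t ht
    rw [hf, cos_iteratedDeriv M]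
    calc |20 ^ M * Real.cos (20 * t + M * (π / 2))| = 20 ^ M * |Real.cos (20 * t + M * (π / 2))| := by
          rw [abs_mul, abs_of_nonneg (by positivity : (0:ℝ) ≤ 20 ^ M)]
      _ ≤ 20 ^ M * 1 := by
          exact mul_le_mul_of_nonneg_left (Real.abs_cos_le_one _) (by positivity)
      _ = 20 ^ M := mul_one _
  have hS_le : ∀ M : ℕ, (⨆ x : Set.Icc (-1:ℝ) 1, |(chebInterp M f).eval (x:ℝ) - f (x:ℝ)|)
      ≤ 20 ^ M * 2 ^ M / M.factorial := fun M => ciSup_le (hbound M)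
  have hS_nonneg : ∀ M : ℕ, 0 ≤ ⨆ x : Set.Icc (-1:ℝ) 1,
      |(chebInterp M f).eval (x:ℝ) - f (x:ℝ)| := fun M =>
    Real.iSup_nonneg (fun x => abs_nonneg _)
  have hρpos : (0:ℝ) < ρ := lt_trans one_pos hρ
  refine squeeze_zero (fun M => mul_nonneg (by positivity) (hS_nonneg M))
    (g := fun M => (40 * ρ) ^ M / M.factorial) (fun M => ?_) ?_
  · calc ρ ^ M * (⨆ x : Set.Icc (-1:ℝ) 1, |(chebInterp M f).eval (x:ℝ) - f (x:ℝ)|)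
        ≤ ρ ^ M * (20 ^ M * 2 ^ M / M.factorial) :=
          mul_le_mul_of_nonneg_left (hS_le M) (by positivity)
      _ = (40 * ρ) ^ M / M.factorial := by
          rw [mul_pow]
          have : (40:ℝ) ^ M = 20 ^ M * 2 ^ M := by
            rw [← mul_pow]; norm_num
          rw [this]; ring
  · exact FloorSemiring.tendsto_pow_div_factorial_atTop (40 * ρ)
end

section
/- Let f(x) = √(2 − x) on [−1,1] and let p_M be the Lagrange interpolating polynomial of f at the M Chebyshev nodes. Since the only singularity of f is the real branch point at x = 2, which lies on the Bernstein ellipse of parameter 2 + √3, the error converges geometrically with any rate below 2 + √3: for every ρ with 1 < ρ < 2 + √3, ρ^M · sup_{x ∈ [−1,1]} |p_M(x) − f(x)| → 0 as M → ∞. -/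
open scoped Real

namespace Stmt13
open Complex Polynomial Filter

noncomputable def q : ℝ := 2 - Real.sqrt 3

lemma sqrt3_lt : Real.sqrt 3 < 2 := by
  nlinarith [Real.sq_sqrt (by norm_num : (3:ℝ) ≥ 0), Real.sqrt_nonneg 3]

lemma one_lt_sqrt3 : 1 < Real.sqrt 3 := by
  nlinarith [Real.sq_sqrt (by norm_num : (3:ℝ) ≥ 0), Real.sqrt_nonneg 3]

lemma q_pos : 0 < q := by simp [q, sqrt3_lt]
lemma q_lt_one : q < 1 := by simp only [q]; linarith [one_lt_sqrt3]
lemma q_mul : q * (2 + Real.sqrt 3) = 1 := by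
  have := Real.sq_sqrt (by norm_num : (3:ℝ) ≥ 0)
  simp only [q]; nlinarith

lemma quad (x : ℝ) : 1 - 2*q*x + q^2 = 2*q*(2-x) := by
  have := Real.sq_sqrt (by norm_num : (3:ℝ) ≥ 0)
  simp only [q]; nlinarith

noncomputable def hf : ℂ → ℂ := fun z => Complex.exp ((1/2 : ℂ) * Complex.log (1 - (q:ℂ) * z))

lemma re_pos {z : ℂ} (hz : ‖z‖ < q⁻¹) : 0 < (1 - (q:ℂ)*z).re := by
  have h1 : |z.re| ≤ ‖z‖ := Complex.abs_re_le_norm z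
  have : q * z.re < 1 := by
    rcases le_or_gt z.re 0 with h | h
    · nlinarith [q_pos]
    · have : z.re < q⁻¹ := lt_of_le_of_lt (le_trans (le_abs_self _) h1) hz
      calc q * z.re < q * q⁻¹ := by exact (mul_lt_mul_iff_right₀ q_pos).2 this
        _ = 1 := mul_inv_cancel₀ (ne_of_gt q_pos)
  simp [Complex.sub_re, Complex.mul_re]
  simpa using this

lemma slit {z : ℂ} (hz : ‖z‖ < q⁻¹) : (1 - (q:ℂ)*z) ∈ Complex.slitPlane :=
  Or.inl (re_pos hz)

lemma hf_diffat {z : ℂ} (hz : ‖z‖ < q⁻¹) : DifferentiableAt ℂ hf z := by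
  apply DifferentiableAt.cexp
  apply DifferentiableAt.mul (differentiableAt_const _)
  exact ((differentiableAt_const _).sub ((differentiableAt_const _).mul differentiableAt_id)).clog (slit hz)

lemma hf_sq {z : ℂ} (hz : ‖z‖ < q⁻¹) : hf z ^ 2 = 1 - (q:ℂ)*z := by
  have hne : (1 - (q:ℂ)*z) ≠ 0 := Complex.slitPlane_ne_zero (slit hz)
  have : hf z ^ 2 = Complex.exp ((1/2 : ℂ) * Complex.log (1 - (q:ℂ) * z) + (1/2 : ℂ) * Complex.log (1 - (q:ℂ) * z)) := by
    rw [Complex.exp_add, hf]; ring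
  rw [this]
  have : (1/2 : ℂ) * Complex.log (1 - (q:ℂ) * z) + (1/2 : ℂ) * Complex.log (1 - (q:ℂ) * z) = Complex.log (1 - (q:ℂ)*z) := by ring
  rw [this, Complex.exp_log hne]

lemma hf_conj {z : ℂ} (hz : ‖z‖ < q⁻¹) : hf ((starRingEnd ℂ) z) = (starRingEnd ℂ) (hf z) := by
  have harg : (1 - (q:ℂ)*z).arg ≠ π := by
    intro h
    have := Complex.arg_eq_pi_iff.1 h
    linarith [re_pos hz, this.1]
  have hz' : (starRingEnd ℂ) (1 - (q:ℂ)*z) = 1 - (q:ℂ)* (starRingEnd ℂ) z := by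
    simp [map_sub, map_mul, Complex.conj_ofReal]
  rw [hf, hf, ← hz', ← Complex.exp_conj, Complex.log_conj _ harg, map_mul]
  congr 1
  congr 1
  simp [map_ofNat, Complex.conj_ofReal]


lemma hf_norm {z : ℂ} (hz : ‖z‖ < q⁻¹) : ‖hf z‖ ≤ 3 := by
  have hu : ‖(1:ℂ) - (q:ℂ)*z‖ ≤ 2 := by
    calc ‖(1:ℂ) - (q:ℂ)*z‖ ≤ ‖(1:ℂ)‖ + ‖(q:ℂ)*z‖ := norm_sub_le _ _
      _ ≤ 1 + 1 := by
          rw [norm_one]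
          apply add_le_add le_rfl
          rw [norm_mul, Complex.norm_real, Real.norm_of_nonneg q_pos.le]
          calc q * ‖z‖ ≤ q * q⁻¹ := by
                apply mul_le_mul_of_nonneg_left hz.le q_pos.le
            _ = 1 := mul_inv_cancel₀ (ne_of_gt q_pos)
      _ = 2 := by norm_num
  have hre : ((1/2 : ℂ) * Complex.log (1 - (q:ℂ) * z)).re ≤ 1/2 := by
    have : (Complex.log (1 - (q:ℂ) * z)).re = Real.log ‖1 - (q:ℂ)*z‖ :=
      Complex.log_re _
    have hlog : Real.log ‖1 - (q:ℂ)*z‖ ≤ 1 := by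
      calc Real.log ‖1 - (q:ℂ)*z‖ ≤ Real.log 2 := by
            rcases eq_or_ne ‖1 - (q:ℂ)*z‖ 0 with h0 | h0
            · rw [h0]; simp [Real.log_nonneg]
            · rw [Real.log_le_log_iff (lt_of_le_of_ne (norm_nonneg _) (Ne.symm h0)) (by norm_num)]
              simpa using hu
        _ ≤ 1 := by linarith [Real.log_le_sub_one_of_pos (by norm_num : (0:ℝ) < 2)]
    have h2 : ((1/2 : ℂ) * Complex.log (1 - (q:ℂ) * z)).re
        = (1/2) * (Complex.log (1 - (q:ℂ) * z)).re := by
      simp [Complex.mul_re]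
    rw [h2, this]; linarith
  rw [hf, Complex.norm_exp]
  calc Real.exp _ ≤ Real.exp (1/2) := Real.exp_le_exp.2 hre
    _ ≤ Real.exp 1 := Real.exp_le_exp.2 (by norm_num)
    _ ≤ 3 := by linarith [Real.exp_one_lt_d9.le]

lemma two_sub_cos_pos (θ : ℝ) : 0 < 2 - Real.cos θ := by
  nlinarith [Real.cos_le_one θ, Real.neg_one_le_cos θ]

lemma hf_prod (θ : ℝ) :
    hf (Complex.exp (θ*I)) * hf (Complex.exp (-θ*I)) =
      ((Real.sqrt (2*q) * Real.sqrt (2 - Real.cos θ) : ℝ) : ℂ) := by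
  set z := Complex.exp ((θ:ℂ)*I) with hzdef
  have hz1 : ‖z‖ < q⁻¹ := by
    rw [hzdef, Complex.norm_exp_ofReal_mul_I]
    exact one_lt_inv_iff₀.2 ⟨q_pos, q_lt_one⟩
  have hconjz : Complex.exp (-(θ:ℂ)*I) = (starRingEnd ℂ) z := by
    rw [hzdef, ← Complex.exp_conj]
    congr 1
    simp [Complex.conj_ofReal]
  have key : hf z * hf ((starRingEnd ℂ) z) = (Complex.normSq (hf z) : ℂ) := by
    rw [hf_conj hz1, Complex.mul_conj]
  have hB2 : ‖(1:ℂ) - (q:ℂ)*z‖^2 = 2*q*(2 - Real.cos θ) := by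
    have hre : ((1:ℂ) - (q:ℂ)*z).re = 1 - q * Real.cos θ := by
      simp [hzdef, Complex.sub_re, Complex.mul_re, Complex.exp_ofReal_mul_I_re,
        Complex.exp_ofReal_mul_I_im]
    have him : ((1:ℂ) - (q:ℂ)*z).im = -(q * Real.sin θ) := by
      simp [hzdef, Complex.sub_im, Complex.mul_im, Complex.exp_ofReal_mul_I_re,
        Complex.exp_ofReal_mul_I_im]
    rw [Complex.sq_norm, Complex.normSq_apply, hre, him]
    have hq := quad (Real.cos θ)
    nlinarith [Real.sin_sq_add_cos_sq θ, sq_nonneg q]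
  have hA : ‖hf z‖^2 = Real.sqrt (2*q*(2 - Real.cos θ)) := by
    have h4 : (‖hf z‖^2)^2 = (2*q*(2 - Real.cos θ)) := by
      rw [← norm_pow, hf_sq hz1, hB2]
    rw [← h4, Real.sqrt_sq (by positivity)]
  rw [hconjz, key, Complex.normSq_eq_norm_sq, hA,
    Real.sqrt_mul (by nlinarith [q_pos] : (0:ℝ) ≤ 2*q)]


section Series

variable {r : ℝ}

lemma hf_diffOn (hrq : r < q⁻¹) :
    DifferentiableOn ℂ hf (Metric.closedBall (0:ℂ) r.toNNReal) := by
  intro z hz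
  apply (hf_diffat _).differentiableWithinAt
  rw [Metric.mem_closedBall, dist_zero_right] at hz
  calc ‖z‖ ≤ (r.toNNReal : ℝ) := hz
    _ ≤ r ⊔ 0 := by rw [Real.coe_toNNReal']
    _ < q⁻¹ := by
        rcases le_total r 0 with h|h
        · rw [sup_eq_right.2 h]; exact inv_pos.2 q_pos
        · rw [sup_eq_left.2 h]; exact hrq

lemma hf_hasFPow (hr0 : 0 < r) (hrq : r < q⁻¹) :
    HasFPowerSeriesOnBall hf (cauchyPowerSeries hf 0 r.toNNReal) 0 r.toNNReal :=
  (hf_diffOn hrq).hasFPowerSeriesOnBall (by simpa using hr0)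

/-- The Taylor coefficients of `hf` (w.r.t. radius r). -/
noncomputable def bc (r : ℝ) (n : ℕ) : ℂ := (cauchyPowerSeries hf 0 r.toNNReal).coeff n

lemma bc_bound (hr1 : 1 < r) (hrq : r < q⁻¹) (n : ℕ) : ‖bc r n‖ ≤ 3 * (r⁻¹)^n := by
  have hr0 : (0:ℝ) < r := lt_trans one_pos hr1
  have hcont : Continuous fun θ : ℝ => ‖hf (circleMap 0 (r.toNNReal:ℝ) θ)‖ := by
    apply Continuous.norm
    rw [continuous_iff_continuousAt]
    intro θ
    have hnorm : ‖circleMap 0 (r.toNNReal:ℝ) θ‖ < q⁻¹ := by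
      rw [norm_circleMap_zero, _root_.abs_of_nonneg (NNReal.coe_nonneg _),
        Real.coe_toNNReal _ hr0.le]
      exact hrq
    exact ((hf_diffat hnorm).continuousAt).comp (continuous_circleMap 0 _).continuousAt
  have hint : ∫ θ : ℝ in (0)..2*π, ‖hf (circleMap 0 (r.toNNReal:ℝ) θ)‖ ≤ 2*π*3 := by
    calc ∫ θ : ℝ in (0)..2*π, ‖hf (circleMap 0 (r.toNNReal:ℝ) θ)‖
        ≤ ∫ _ : ℝ in (0)..2*π, (3:ℝ) := by
          apply intervalIntegral.integral_mono_on Real.two_pi_pos.le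
            (hcont.intervalIntegrable _ _) (intervalIntegrable_const)
          intro θ _
          apply hf_norm
          rw [norm_circleMap_zero, _root_.abs_of_nonneg (NNReal.coe_nonneg _),
            Real.coe_toNNReal _ hr0.le]
          exact hrq
      _ = 2*π*3 := by simp [mul_comm]
  have h1 : ‖bc r n‖ = ‖cauchyPowerSeries hf 0 (r.toNNReal:ℝ) n‖ :=
    (FormalMultilinearSeries.norm_apply_eq_norm_coef).symm
  rw [h1]
  calc ‖cauchyPowerSeries hf 0 (r.toNNReal:ℝ) n‖
      ≤ ((2*π)⁻¹ * ∫ θ : ℝ in (0)..2*π, ‖hf (circleMap 0 (r.toNNReal:ℝ) θ)‖) *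
          |(r.toNNReal:ℝ)|⁻¹ ^ n := norm_cauchyPowerSeries_le _ _ _ _
    _ ≤ ((2*π)⁻¹ * (2*π*3)) * |(r.toNNReal:ℝ)|⁻¹ ^ n := by
        apply mul_le_mul_of_nonneg_right _ (by positivity)
        apply mul_le_mul_of_nonneg_left hint (by positivity)
    _ = 3 * (r⁻¹)^n := by
        rw [_root_.abs_of_nonneg (NNReal.coe_nonneg _), Real.coe_toNNReal _ hr0.le]
        have h3 : (2*π)⁻¹ * (2*π*3) = 3 := by
          field_simp
        rw [h3]

lemma bc_hasSum (hr1 : 1 < r) (hrq : r < q⁻¹) {y : ℂ} (hy : ‖y‖ = 1) :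
    HasSum (fun n => bc r n * y^n) (hf y) := by
  have hr0 : (0:ℝ) < r := lt_trans one_pos hr1
  have hmem : y ∈ Metric.eball (0:ℂ) r.toNNReal := by
    rw [mem_emetric_ball_zero_iff, enorm_eq_nnnorm, ENNReal.coe_lt_coe, ← NNReal.coe_lt_coe, coe_nnnorm,
      Real.coe_toNNReal _ hr0.le, hy]
    exact hr1
  have := (hf_hasFPow hr0 hrq).hasSum hmem
  simp only [zero_add] at this
  have heq : ∀ n, ((cauchyPowerSeries hf 0 r.toNNReal) n fun _ => y) = bc r n * y^n := by
    intro n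
    rw [FormalMultilinearSeries.apply_eq_pow_smul_coeff, smul_eq_mul, bc]
    ring
  simpa only [heq] using this


lemma re_mul_exp (w : ℂ) (s : ℝ) :
    (w * Complex.exp ((s:ℂ)*I)).re = w.re * Real.cos s - w.im * Real.sin s := by
  rw [Complex.exp_mul_I, mul_add, Complex.add_re, Complex.mul_re, Complex.mul_re]
  simp [Complex.cos_ofReal_re, Complex.sin_ofReal_re, Complex.cos_ofReal_im,
    Complex.sin_ofReal_im, Complex.mul_im]
  ring

lemma summable_bc_norm (hr1 : 1 < r) (hrq : r < q⁻¹) :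
    Summable (fun n => ‖bc r n‖) := by
  apply Summable.of_nonneg_of_le (fun n => norm_nonneg _) (bc_bound hr1 hrq)
  apply Summable.mul_left
  apply summable_geometric_of_lt_one (by positivity)
  rw [inv_lt_one_iff₀]; right; exact hr1

/-- coefficients of the Chebyshev-type expansion -/
noncomputable def cc (r : ℝ) (p : ℕ × ℕ) : ℝ :=
  (Real.sqrt (2*q))⁻¹ * (bc r p.1 * bc r p.2).re

lemma cc_bound (hr1 : 1 < r) (hrq : r < q⁻¹) (p : ℕ × ℕ) :
    |cc r p| ≤ (9 * (Real.sqrt (2*q))⁻¹) * (r⁻¹)^(p.1+p.2) := by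
  have hs : (0:ℝ) < Real.sqrt (2*q) := Real.sqrt_pos.2 (by linarith [q_pos])
  have h1 : |(bc r p.1 * bc r p.2).re| ≤ ‖bc r p.1‖ * ‖bc r p.2‖ := by
    calc |(bc r p.1 * bc r p.2).re| ≤ ‖bc r p.1 * bc r p.2‖ := Complex.abs_re_le_norm _
      _ = ‖bc r p.1‖ * ‖bc r p.2‖ := norm_mul _ _
  have h2 : ‖bc r p.1‖ * ‖bc r p.2‖ ≤ 9 * (r⁻¹)^(p.1+p.2) := by
    calc ‖bc r p.1‖ * ‖bc r p.2‖ ≤ (3*(r⁻¹)^p.1) * (3*(r⁻¹)^p.2) :=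
        mul_le_mul (bc_bound hr1 hrq _) (bc_bound hr1 hrq _) (norm_nonneg _) (by positivity)
      _ = 9 * (r⁻¹)^(p.1+p.2) := by rw [pow_add]; ring
  rw [cc, abs_mul, _root_.abs_of_nonneg (inv_nonneg.2 hs.le)]
  calc (Real.sqrt (2*q))⁻¹ * |(bc r p.1 * bc r p.2).re|
      ≤ (Real.sqrt (2*q))⁻¹ * (9 * (r⁻¹)^(p.1+p.2)) := by
        apply mul_le_mul_of_nonneg_left _ (by positivity)
        exact le_trans h1 h2
    _ = (9 * (Real.sqrt (2*q))⁻¹) * (r⁻¹)^(p.1+p.2) := by ring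

set_option maxHeartbeats 1000000 in
lemma summable_prod_norm (hr1 : 1 < r) (hrq : r < q⁻¹) :
    Summable (fun p : ℕ × ℕ => ‖bc r p.1‖ * ‖bc r p.2‖) :=
  Summable.mul_of_nonneg (summable_bc_norm hr1 hrq) (summable_bc_norm hr1 hrq)
    (fun _ => norm_nonneg _) (fun _ => norm_nonneg _)

lemma master (hr1 : 1 < r) (hrq : r < q⁻¹) (θ : ℝ) :
    HasSum (fun p : ℕ × ℕ => cc r p * Real.cos (((p.1:ℝ) - (p.2:ℝ)) * θ))
      (Real.sqrt (2 - Real.cos θ)) := by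
  set y : ℂ := Complex.exp ((θ:ℂ)*I) with hy
  set w : ℂ := Complex.exp ((-θ:ℂ)*I) with hw
  have hy1 : ‖y‖ = 1 := by rw [hy, Complex.norm_exp_ofReal_mul_I]
  have hw1 : ‖w‖ = 1 := by
    rw [hw, show -(θ:ℂ) = ((-θ:ℝ):ℂ) by push_cast; ring]
    exact Complex.norm_exp_ofReal_mul_I (-θ)
  -- summability of term norms
  have hsn1 : Summable fun n => ‖bc r n * y^n‖ := by
    apply Summable.congr (summable_bc_norm hr1 hrq)
    intro n; rw [norm_mul, norm_pow, hy1, one_pow, mul_one]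
  have hsn2 : Summable fun n => ‖bc r n * w^n‖ := by
    apply Summable.congr (summable_bc_norm hr1 hrq)
    intro n; rw [norm_mul, norm_pow, hw1, one_pow, mul_one]
  -- product of sums
  have hprod := tsum_mul_tsum_of_summable_norm hsn1 hsn2
  have ht1 := (bc_hasSum hr1 hrq hy1).tsum_eq
  have ht2 := (bc_hasSum hr1 hrq hw1).tsum_eq
  rw [ht1, ht2] at hprod
  -- summability of the product family
  have hsprod : Summable fun p : ℕ × ℕ => ‖(bc r p.1 * y^p.1) * (bc r p.2 * w^p.2)‖ := by
    apply Summable.congr (summable_prod_norm hr1 hrq)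
    intro p
    rw [norm_mul, norm_mul, norm_mul, norm_pow, norm_pow, hy1, hw1, one_pow, one_pow,
      mul_one, mul_one]
  have hsum : HasSum (fun p : ℕ × ℕ => (bc r p.1 * y^p.1) * (bc r p.2 * w^p.2))
      (hf y * hf w) := by
    have h := hsprod.of_norm.hasSum
    rwa [← hprod] at h
  -- value of the product
  rw [hf_prod θ] at hsum
  -- take real parts
  have hre : HasSum (fun p : ℕ × ℕ => ((bc r p.1 * y^p.1) * (bc r p.2 * w^p.2)).re)
      (Real.sqrt (2*q) * Real.sqrt (2 - Real.cos θ)) := by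
    have := Complex.hasSum_re hsum
    simpa using this
  -- rewrite terms
  have hterm : ∀ p : ℕ × ℕ, ((bc r p.1 * y^p.1) * (bc r p.2 * w^p.2)).re
      = (bc r p.1 * bc r p.2).re * Real.cos (((p.1:ℝ) - (p.2:ℝ)) * θ)
        - (bc r p.1 * bc r p.2).im * Real.sin (((p.1:ℝ) - (p.2:ℝ)) * θ) := by
    intro p
    have hypow : y ^ p.1 * w ^ p.2 = Complex.exp (((((p.1:ℝ) - (p.2:ℝ)) * θ : ℝ) : ℂ) * I) := by
      rw [hy, hw, ← Complex.exp_nat_mul, ← Complex.exp_nat_mul, ← Complex.exp_add]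
      congr 1
      push_cast
      ring
    have : (bc r p.1 * y^p.1) * (bc r p.2 * w^p.2)
        = (bc r p.1 * bc r p.2) * (y ^ p.1 * w ^ p.2) := by ring
    rw [this, hypow, re_mul_exp]
  rw [funext hterm] at hre
  -- the sine part sums to zero
  set S : ℕ × ℕ → ℝ := fun p => (bc r p.1 * bc r p.2).im * Real.sin (((p.1:ℝ) - (p.2:ℝ)) * θ)
    with hS
  have hSsummable : Summable S := by
    apply Summable.of_norm
    apply Summable.of_nonneg_of_le (fun p => norm_nonneg _) _ (summable_prod_norm hr1 hrq)
    intro p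
    rw [hS]
    calc ‖(bc r p.1 * bc r p.2).im * Real.sin (((p.1:ℝ) - (p.2:ℝ)) * θ)‖
        ≤ |(bc r p.1 * bc r p.2).im| * 1 := by
          rw [Real.norm_eq_abs, abs_mul]
          exact mul_le_mul_of_nonneg_left (Real.abs_sin_le_one _) (abs_nonneg _)
      _ ≤ ‖bc r p.1‖ * ‖bc r p.2‖ := by
          rw [mul_one, ← norm_mul]
          exact Complex.abs_im_le_norm _
  have hSzero : ∑' p, S p = 0 := by
    have hswap : ∑' p, S ((Equiv.prodComm ℕ ℕ) p) = ∑' p, S p :=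
      (Equiv.prodComm ℕ ℕ).tsum_eq S
    have hneg : ∀ p : ℕ × ℕ, S ((Equiv.prodComm ℕ ℕ) p) = - S p := by
      intro p
      simp only [hS, Equiv.prodComm_apply, Prod.swap, Prod.fst, Prod.snd]
      rw [mul_comm (bc r p.2)]
      have : ((p.2:ℝ) - (p.1:ℝ)) * θ = -((((p.1:ℝ) - (p.2:ℝ))) * θ) := by ring
      rw [this, Real.sin_neg]
      ring
    rw [funext hneg, tsum_neg] at hswap
    linarith
  have hShasSum : HasSum S 0 := by
    rw [← hSzero]
    exact hSsummable.hasSum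
  -- combine
  have hcos := hre.add hShasSum
  have hfun : (fun p : ℕ × ℕ => ((bc r p.1 * bc r p.2).re * Real.cos (((p.1:ℝ) - (p.2:ℝ)) * θ)
      - (bc r p.1 * bc r p.2).im * Real.sin (((p.1:ℝ) - (p.2:ℝ)) * θ)) + S p)
      = fun p : ℕ × ℕ => (bc r p.1 * bc r p.2).re * Real.cos (((p.1:ℝ) - (p.2:ℝ)) * θ) := by
    funext p
    simp only [hS]
    ring
  rw [hfun, add_zero] at hcos
  -- multiply by the constant
  have hs : (0:ℝ) < Real.sqrt (2*q) := Real.sqrt_pos.2 (by linarith [q_pos])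
  have hfinal := hcos.mul_left (Real.sqrt (2*q))⁻¹
  rw [← mul_assoc, inv_mul_cancel₀ (ne_of_gt hs), one_mul] at hfinal
  have heq : (fun p : ℕ × ℕ => (Real.sqrt (2*q))⁻¹ *
      ((bc r p.1 * bc r p.2).re * Real.cos (((p.1:ℝ) - (p.2:ℝ)) * θ)))
      = fun p : ℕ × ℕ => cc r p * Real.cos (((p.1:ℝ) - (p.2:ℝ)) * θ) := by
    funext p
    rw [cc]
    ring
  rwa [heq] at hfinal

end Series

section Cheb

open Polynomial

/-- Node angles. -/
noncomputable def θnode (M : ℕ) (k : Fin M) : ℝ := (2*(k:ℝ)+1)*π/(2*(M:ℝ))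

lemma chebNodes_eq (M : ℕ) (k : Fin M) : chebNodes M k = Real.cos (θnode M k) := rfl

variable {M : ℕ}

lemma θnode_mem (hM : 0 < M) (k : Fin M) : θnode M k ∈ Set.Ioo 0 π := by
  have hMR : (0:ℝ) < (M:ℝ) := by exact_mod_cast hM
  have hk : (k:ℝ) ≤ (M:ℝ) - 1 := by
    have : (k:ℕ) ≤ M - 1 := Nat.le_sub_one_of_lt k.isLt
    have h2 : ((k:ℕ):ℝ) ≤ ((M-1 : ℕ):ℝ) := by exact_mod_cast this
    rwa [Nat.cast_sub hM, Nat.cast_one] at h2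
  constructor
  · rw [θnode]
    apply div_pos _ (by linarith)
    positivity
  · rw [θnode, div_lt_iff₀ (by linarith : (0:ℝ) < 2*(M:ℝ))]
    nlinarith [Real.pi_pos]

lemma two_M_theta (hM : 0 < M) (k : Fin M) : (2*(M:ℝ)) * θnode M k = (2*(k:ℝ)+1)*π := by
  have hMR : (0:ℝ) < (M:ℝ) := by exact_mod_cast hM
  rw [θnode]
  field_simp

lemma cos_odd_pi (k : Fin M) : Real.cos ((2*(k:ℝ)+1)*π) = -1 := by
  have : (2*(k:ℝ)+1)*π = (k:ℝ)*(2*π) + π := by ring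
  rw [this]
  exact_mod_cast Real.cos_nat_mul_two_pi_add_pi (k:ℕ)

lemma sin_odd_pi (k : Fin M) : Real.sin ((2*(k:ℝ)+1)*π) = 0 := by
  have : (2*(k:ℝ)+1)*π = ((2*(k:ℕ)+1 : ℕ):ℝ)*π := by push_cast; ring
  rw [this]
  exact Real.sin_nat_mul_pi _

lemma nodes_injOn (hM : 0 < M) :
    Set.InjOn (chebNodes M) (Finset.univ : Finset (Fin M)) := by
  intro k _ l _ h
  have hk := θnode_mem hM k
  have hl := θnode_mem hM l
  have h' : Real.cos (θnode M k) = Real.cos (θnode M l) := by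
    rw [← chebNodes_eq, ← chebNodes_eq]; exact h
  have hinj : θnode M k = θnode M l := Real.injOn_cos
    ⟨hk.1.le, hk.2.le⟩ ⟨hl.1.le, hl.2.le⟩ h' 
  have hMR : (0:ℝ) < (M:ℝ) := by exact_mod_cast hM
  have hπ := Real.pi_pos
  have e := congrArg (fun t => (2*(M:ℝ))*t) hinj
  rw [two_M_theta hM k, two_M_theta hM l] at e
  have e2 : 2*((k:Fin M):ℝ)+1 = 2*((l:Fin M):ℝ)+1 := mul_right_cancel₀ (ne_of_gt hπ) e
  have : ((k:Fin M):ℝ) = ((l:Fin M):ℝ) := by linarith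
  exact Fin.ext (by exact_mod_cast this)

lemma aliasLemma (hM : 0 < M) : ∀ n : ℕ, ∃ m : ℕ, m ≤ M ∧ ∃ ε : ℝ, (ε = 1 ∨ ε = -1) ∧
    ∀ k : Fin M, Real.cos ((n:ℝ) * θnode M k) = ε * Real.cos ((m:ℝ) * θnode M k) := by
  intro n
  induction n using Nat.strong_induction_on with
  | _ n ih =>
    rcases le_or_gt n M with h | h
    · exact ⟨n, h, 1, Or.inl rfl, fun k => by rw [one_mul]⟩
    rcases lt_or_ge n (2*M) with h2 | h2
    · refine ⟨2*M - n, by omega, -1, Or.inr rfl, fun k => ?_⟩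
      have hcast : ((2*M - n : ℕ):ℝ) = 2*(M:ℝ) - (n:ℝ) := by
        rw [Nat.cast_sub h2.le]
        push_cast; ring
      have harg : (n:ℝ) * θnode M k = (2*(k:ℝ)+1)*π - ((2*M - n : ℕ):ℝ) * θnode M k := by
        rw [hcast, ← two_M_theta hM k]
        ring
      rw [harg, Real.cos_sub, cos_odd_pi, sin_odd_pi]
      ring
    · obtain ⟨m, hm, ε, hε, hcos⟩ := ih (n - 2*M) (by omega)
      refine ⟨m, hm, -ε, ?_, fun k => ?_⟩
      · rcases hε with h | h
        · right; rw [h]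
        · left; rw [h]; ring
      have hcast : ((n - 2*M : ℕ):ℝ) = (n:ℝ) - 2*(M:ℝ) := by
        rw [Nat.cast_sub h2]
        push_cast; ring
      have harg : (n:ℝ) * θnode M k = ((n - 2*M : ℕ):ℝ) * θnode M k + (2*(k:ℝ)+1)*π := by
        rw [hcast, ← two_M_theta hM k]
        ring
      rw [harg, Real.cos_add, cos_odd_pi, sin_odd_pi, hcos k]
      ring

lemma cos_M_node (hM : 0 < M) (k : Fin M) : Real.cos ((M:ℝ) * θnode M k) = 0 := by
  have hMR : (0:ℝ) < (M:ℝ) := by exact_mod_cast hM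
  have : (M:ℝ) * θnode M k = (k:ℝ)*π + π/2 := by
    rw [θnode]
    field_simp
    try ring
  rw [this]
  have h2 : Real.cos ((k:ℝ)*π + π/2) = -Real.sin ((k:ℝ)*π) := Real.cos_add_pi_div_two _
  rw [h2]
  rw [show ((k:ℝ)*π) = (((k:ℕ):ℝ))*π from rfl, Real.sin_nat_mul_pi]
  ring

lemma natDegree_T_le (n : ℕ) : (Polynomial.Chebyshev.T ℝ (n:ℤ)).natDegree ≤ n := by
  induction n using Nat.strong_induction_on with
  | _ n ih =>
    match n with
    | 0 => simp [Polynomial.Chebyshev.T_zero]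
    | 1 => simpa [Polynomial.Chebyshev.T_one] using Polynomial.natDegree_X_le
    | (m+2) =>
      have hT := Polynomial.Chebyshev.T_add_two ℝ (m:ℤ)
      have hcast : ((m+2 : ℕ):ℤ) = (m:ℤ) + 2 := by push_cast; ring
      rw [hcast, hT]
      apply le_trans (Polynomial.natDegree_sub_le _ _)
      apply max_le
      · apply le_trans (Polynomial.natDegree_mul_le)
        have h1 : (2*Polynomial.X : Polynomial ℝ).natDegree ≤ 1 := by
          apply le_trans (Polynomial.natDegree_mul_le)
          simp
        have h2 : (Polynomial.Chebyshev.T ℝ ((m:ℤ)+1)).natDegree ≤ m+1 := by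
          have := ih (m+1) (by omega)
          rwa [show ((m+1:ℕ):ℤ) = (m:ℤ)+1 by push_cast; ring] at this
        omega
      · have := ih m (by omega)
        omega

lemma degree_T_lt (n : ℕ) (hn : n < M) : (Polynomial.Chebyshev.T ℝ (n:ℤ)).degree < (M:ℕ) := by
  apply lt_of_le_of_lt (Polynomial.degree_le_natDegree)
  exact_mod_cast lt_of_le_of_lt (by exact_mod_cast natDegree_T_le n) hn

/-- Interpolant of the values cos(n θ_k). -/
noncomputable def Q (M : ℕ) (n : ℕ) : Polynomial ℝ :=
  Lagrange.interpolate Finset.univ (chebNodes M) (fun k => Real.cos ((n:ℝ) * θnode M k))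

lemma eval_interp (s : Finset (Fin M)) (v : Fin M → ℝ) (r : Fin M → ℝ) (x : ℝ) :
    (Lagrange.interpolate s v r).eval x = ∑ i ∈ s, r i * (Lagrange.basis s v i).eval x := by
  rw [Lagrange.interpolate_apply, Polynomial.eval_finset_sum]
  apply Finset.sum_congr rfl
  intro i _
  rw [Polynomial.eval_mul, Polynomial.eval_C]

lemma Q_eq_T (hM : 0 < M) {n : ℕ} (hn : n < M) : Q M n = Polynomial.Chebyshev.T ℝ (n:ℤ) := by
  symm
  apply Lagrange.eq_interpolate_of_eval_eq _ (nodes_injOn hM)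
  · rw [Finset.card_univ, Fintype.card_fin]
    exact degree_T_lt n hn
  · intro k _
    rw [chebNodes_eq, Polynomial.Chebyshev.T_real_cos]
    norm_num

lemma Q_M_eq_zero (hM : 0 < M) : Q M M = 0 := by
  rw [Q]
  have : (fun k : Fin M => Real.cos ((M:ℝ) * θnode M k)) = (0 : Fin M → ℝ) := by
    funext k; exact cos_M_node hM k
  rw [this]
  exact map_zero _

lemma Q_eval_eq (hM : 0 < M) {n : ℕ} (hn : n < M) {x : ℝ} (hx : x ∈ Set.Icc (-1:ℝ) 1) :
    (Q M n).eval x = Real.cos ((n:ℝ) * Real.arccos x) := by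
  rw [Q_eq_T hM hn]
  have h1 : (Polynomial.Chebyshev.T ℝ (n:ℤ)).eval (Real.cos (Real.arccos x))
      = Real.cos (((n:ℤ):ℝ) * Real.arccos x) := Polynomial.Chebyshev.T_real_cos _ _
  rw [Real.cos_arccos hx.1 hx.2] at h1
  rw [h1]
  norm_num

lemma Q_eval_le (hM : 0 < M) (n : ℕ) {x : ℝ} (hx : x ∈ Set.Icc (-1:ℝ) 1) :
    |(Q M n).eval x| ≤ 1 := by
  obtain ⟨m, hm, ε, hε, hcos⟩ := aliasLemma hM n
  have hvals : (fun k : Fin M => Real.cos ((n:ℝ) * θnode M k))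
      = ε • (fun k : Fin M => Real.cos ((m:ℝ) * θnode M k)) := by
    funext k
    rw [hcos k]
    rfl
  have hQ : Q M n = ε • Q M m := by
    rw [Q, Q, hvals, map_smul]
  rw [hQ, Polynomial.eval_smul, smul_eq_mul, abs_mul]
  have hε1 : |ε| = 1 := by rcases hε with h | h <;> rw [h] <;> norm_num
  rw [hε1, one_mul]
  rcases lt_or_eq_of_le hm with hlt | heq
  · rw [Q_eval_eq hM hlt hx]
    exact Real.abs_cos_le_one _
  · rw [heq, Q_M_eq_zero hM]
    norm_num

end Cheb

section Err

open Polynomial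

lemma cos_nat_dist (j k : ℕ) (t : ℝ) :
    Real.cos (((j:ℝ) - (k:ℝ)) * t) = Real.cos ((Nat.dist j k : ℝ) * t) := by
  rcases le_total j k with h | h
  · rw [Nat.dist_eq_sub_of_le h]
    have : ((j:ℝ) - (k:ℝ)) * t = -(((k - j : ℕ):ℝ) * t) := by
      rw [Nat.cast_sub h]; ring
    rw [this, Real.cos_neg]
  · rw [Nat.dist_eq_sub_of_le_right h, Nat.cast_sub h]

variable {r : ℝ}

lemma summable_cc (hr1 : 1 < r) (hrq : r < q⁻¹) : Summable (fun p : ℕ×ℕ => |cc r p|) := by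
  have hr0 : (0:ℝ) < r := lt_trans one_pos hr1
  have hu0 : (0:ℝ) ≤ r⁻¹ := by positivity
  have hu1 : r⁻¹ < 1 := by rw [inv_lt_one_iff₀]; right; exact hr1
  have hgeo : Summable (fun n : ℕ => (r⁻¹)^n) := summable_geometric_of_lt_one hu0 hu1
  have hgeo2 : Summable (fun p : ℕ×ℕ => (r⁻¹)^p.1 * (r⁻¹)^p.2) :=
    hgeo.mul_of_nonneg hgeo (fun n => by positivity) (fun n => by positivity)
  apply Summable.of_nonneg_of_le (fun p => abs_nonneg _) _
    (hgeo2.mul_left (9 * (Real.sqrt (2*q))⁻¹))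
  intro p
  calc |cc r p| ≤ (9 * (Real.sqrt (2*q))⁻¹) * (r⁻¹)^(p.1+p.2) := cc_bound hr1 hrq p
    _ = 9 * (Real.sqrt (2*q))⁻¹ * ((r⁻¹)^p.1 * (r⁻¹)^p.2) := by rw [pow_add]

lemma master_dist (hr1 : 1 < r) (hrq : r < q⁻¹) (θ : ℝ) :
    HasSum (fun p : ℕ×ℕ => cc r p * Real.cos ((Nat.dist p.1 p.2 : ℝ) * θ))
      (Real.sqrt (2 - Real.cos θ)) := by
  have h := master hr1 hrq θ
  simp only [cos_nat_dist] at h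
  exact h

lemma err_bound (hr1 : 1 < r) (hrq : r < q⁻¹) {M : ℕ} (hM : 0 < M) {x : ℝ}
    (hx : x ∈ Set.Icc (-1:ℝ) 1) :
    |(chebInterp M (fun t => Real.sqrt (2 - t))).eval x - Real.sqrt (2 - x)| ≤
      ∑' p : ℕ×ℕ, (if M ≤ Nat.dist p.1 p.2 then 2*|cc r p| else 0) := by
  set f : ℝ → ℝ := fun t => Real.sqrt (2 - t) with hf
  set D : ℕ×ℕ → ℕ := fun p => Nat.dist p.1 p.2 with hD
  have hccsum := summable_cc hr1 hrq
  -- part A: the interpolant value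
  have hsA : Summable (fun p : ℕ×ℕ => cc r p * (Q M (D p)).eval x) := by
    apply Summable.of_norm
    apply Summable.of_nonneg_of_le (fun p => norm_nonneg _) _ hccsum
    intro p
    rw [Real.norm_eq_abs, abs_mul]
    calc |cc r p| * |(Q M (D p)).eval x| ≤ |cc r p| * 1 :=
        mul_le_mul_of_nonneg_left (Q_eval_le hM _ hx) (abs_nonneg _)
      _ = |cc r p| := mul_one _
  have hA : HasSum (fun p : ℕ×ℕ => cc r p * (Q M (D p)).eval x)
      ((chebInterp M f).eval x) := by
    rw [hsA.hasSum_iff]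
    have h1 : (chebInterp M f).eval x
        = ∑ k : Fin M, f (chebNodes M k) *
            (Lagrange.basis Finset.univ (chebNodes M) k).eval x := by
      rw [chebInterp, eval_interp]
    have h2 : ∀ k : Fin M, f (chebNodes M k)
        = ∑' p : ℕ×ℕ, cc r p * Real.cos ((D p : ℝ) * θnode M k) := by
      intro k
      rw [hf, chebNodes_eq]
      exact (master_dist hr1 hrq (θnode M k)).tsum_eq.symm
    rw [h1]
    have h3 : ∀ k : Fin M, f (chebNodes M k) *
        (Lagrange.basis Finset.univ (chebNodes M) k).eval x
        = ∑' p : ℕ×ℕ, cc r p * Real.cos ((D p : ℝ) * θnode M k) *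
            (Lagrange.basis Finset.univ (chebNodes M) k).eval x := by
      intro k
      rw [h2 k, tsum_mul_right]
    simp only [h3]
    rw [← Summable.tsum_finsetSum]
    · apply tsum_congr
      intro p
      rw [Q, eval_interp, Finset.mul_sum]
      apply Finset.sum_congr rfl
      intro i _
      ring
    · intro k _
      exact ((master_dist hr1 hrq (θnode M k)).summable).mul_right _
  -- part B: the function value
  have hB : HasSum (fun p : ℕ×ℕ => cc r p * Real.cos ((D p : ℝ) * Real.arccos x))
      (Real.sqrt (2 - x)) := by
    have h := master_dist hr1 hrq (Real.arccos x)
    rwa [Real.cos_arccos hx.1 hx.2] at h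
  have hd := hA.sub hB
  have htsum : (chebInterp M f).eval x - Real.sqrt (2 - x)
      = ∑' p : ℕ×ℕ, (cc r p * (Q M (D p)).eval x
          - cc r p * Real.cos ((D p : ℝ) * Real.arccos x)) := hd.tsum_eq.symm
  rw [htsum]
  have hterm : ∀ p : ℕ×ℕ, ‖cc r p * (Q M (D p)).eval x
      - cc r p * Real.cos ((D p : ℝ) * Real.arccos x)‖
      ≤ (if M ≤ D p then 2*|cc r p| else 0) := by
    intro p
    by_cases hcase : M ≤ D p
    · rw [if_pos hcase, Real.norm_eq_abs]
      calc |cc r p * (Q M (D p)).eval x - cc r p * Real.cos ((D p : ℝ) * Real.arccos x)|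
          ≤ |cc r p * (Q M (D p)).eval x| + |cc r p * Real.cos ((D p : ℝ) * Real.arccos x)| :=
            abs_sub _ _
        _ ≤ |cc r p| * 1 + |cc r p| * 1 := by
            rw [abs_mul, abs_mul]
            exact add_le_add
              (mul_le_mul_of_nonneg_left (Q_eval_le hM _ hx) (abs_nonneg _))
              (mul_le_mul_of_nonneg_left (Real.abs_cos_le_one _) (abs_nonneg _))
        _ = 2*|cc r p| := by ring
    · rw [if_neg hcase, Q_eval_eq hM (lt_of_not_ge hcase) hx]
      simp
  have hgsummable : Summable (fun p : ℕ×ℕ => (if M ≤ D p then 2*|cc r p| else 0)) := by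
    apply Summable.of_nonneg_of_le _ _ (hccsum.mul_left 2)
    · intro p; split <;> positivity
    · intro p; split
      · exact le_rfl
      · positivity
  calc |∑' p : ℕ×ℕ, (cc r p * (Q M (D p)).eval x
        - cc r p * Real.cos ((D p : ℝ) * Real.arccos x))|
      ≤ ∑' p : ℕ×ℕ, ‖cc r p * (Q M (D p)).eval x
        - cc r p * Real.cos ((D p : ℝ) * Real.arccos x)‖ := by
        rw [← Real.norm_eq_abs]
        apply norm_tsum_le_tsum_norm
        apply Summable.of_nonneg_of_le (fun p => norm_nonneg _) hterm hgsummable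
    _ ≤ ∑' p : ℕ×ℕ, (if M ≤ D p then 2*|cc r p| else 0) := by
        apply Summable.tsum_le_tsum hterm _ hgsummable
        apply Summable.of_nonneg_of_le (fun p => norm_nonneg _) hterm hgsummable


lemma nat_dist_le_add (j k : ℕ) : Nat.dist j k ≤ j + k := by
  simp [Nat.dist]; omega

lemma tail_bound (hr1 : 1 < r) (hrq : r < q⁻¹) {u' : ℝ} (h1 : r⁻¹ < u') (h2 : u' < 1)
    (M : ℕ) :
    ∑' p : ℕ×ℕ, (if M ≤ Nat.dist p.1 p.2 then 2*|cc r p| else 0) ≤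
      (2*(9*(Real.sqrt (2*q))⁻¹)*((1-(r⁻¹/u'))⁻¹)^2) * u'^M := by
  have hr0 : (0:ℝ) < r := lt_trans one_pos hr1
  have hu0 : (0:ℝ) < r⁻¹ := by positivity
  have hu'0 : (0:ℝ) < u' := lt_trans hu0 h1
  set v : ℝ := r⁻¹/u' with hv
  have hv0 : 0 ≤ v := by positivity
  have hv1 : v < 1 := by rw [hv, div_lt_one hu'0]; exact h1
  set K : ℝ := 9*(Real.sqrt (2*q))⁻¹ with hK
  have hK0 : 0 ≤ K := by
    rw [hK]
    have : (0:ℝ) < Real.sqrt (2*q) := Real.sqrt_pos.2 (by linarith [q_pos])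
    positivity
  have hgeov : Summable (fun n : ℕ => v^n) := summable_geometric_of_lt_one hv0 hv1
  have hgeov2 : Summable (fun p : ℕ×ℕ => v^p.1 * v^p.2) :=
    hgeov.mul_of_nonneg hgeov (fun n => by positivity) (fun n => by positivity)
  have hRHSsum : Summable (fun p : ℕ×ℕ => (2*K*u'^M) * (v^p.1 * v^p.2)) :=
    hgeov2.mul_left _
  have hle : ∀ p : ℕ×ℕ, (if M ≤ Nat.dist p.1 p.2 then 2*|cc r p| else 0)
      ≤ (2*K*u'^M) * (v^p.1 * v^p.2) := by
    intro p
    split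
    case isTrue hcase =>
      have hjk : M ≤ p.1 + p.2 := le_trans hcase (nat_dist_le_add _ _)
      calc 2*|cc r p| ≤ 2*(K * (r⁻¹)^(p.1+p.2)) := by
            have := cc_bound hr1 hrq p
            rw [← hK] at this
            linarith [this]
        _ = 2*K*(v^(p.1+p.2) * u'^(p.1+p.2)) := by
            rw [← mul_pow]
            have hvu : v * u' = r⁻¹ := by
              rw [hv]; field_simp
            rw [hvu]
            ring
        _ ≤ 2*K*(v^(p.1+p.2) * u'^M) := by
            apply mul_le_mul_of_nonneg_left _ (by positivity)
            apply mul_le_mul_of_nonneg_left _ (by positivity)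
            exact pow_le_pow_of_le_one hu'0.le h2.le hjk
        _ = (2*K*u'^M) * (v^p.1 * v^p.2) := by rw [pow_add]; ring
    case isFalse hcase =>
      positivity
  calc ∑' p : ℕ×ℕ, (if M ≤ Nat.dist p.1 p.2 then 2*|cc r p| else 0)
      ≤ ∑' p : ℕ×ℕ, (2*K*u'^M) * (v^p.1 * v^p.2) := by
        apply Summable.tsum_le_tsum hle _ hRHSsum
        apply Summable.of_nonneg_of_le _ hle hRHSsum
        intro p; split
        · positivity
        · exact le_rfl
    _ = (2*K*u'^M) * ∑' p : ℕ×ℕ, (v^p.1 * v^p.2) := by rw [tsum_mul_left]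
    _ = (2*K*u'^M) * (((1-v)⁻¹)^2) := by
        congr 1
        have hn : Summable (fun n : ℕ => ‖v^n‖) := by
          apply Summable.congr hgeov
          intro n
          rw [Real.norm_eq_abs, _root_.abs_of_nonneg (by positivity)]
        have := (tsum_mul_tsum_of_summable_norm hn hn).symm
        rw [this, tsum_geometric_of_lt_one hv0 hv1, sq]
    _ = (2*K*((1-v)⁻¹)^2) * u'^M := by ring

end Err

theorem final :
    ∀ ρ : ℝ, 1 < ρ → ρ < 2 + Real.sqrt 3 →
      Filter.Tendsto (fun M : ℕ =>
          ρ ^ M *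
            ⨆ x : Set.Icc (-1 : ℝ) 1,
              |(chebInterp M (fun t => Real.sqrt (2 - t))).eval (x : ℝ) -
                Real.sqrt (2 - (x : ℝ))|)
        Filter.atTop (nhds 0) := by
  intro ρ hρ1 hρ2
  have hqinv : q⁻¹ = 2 + Real.sqrt 3 := inv_eq_of_mul_eq_one_right q_mul
  have hq3 : (1:ℝ) < q⁻¹ := by rw [hqinv]; linarith [one_lt_sqrt3]
  have hρq : ρ < q⁻¹ := by rw [hqinv]; exact hρ2
  set r : ℝ := (ρ + q⁻¹)/2 with hrdef
  have hr1 : 1 < r := by rw [hrdef]; linarith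
  have hρr : ρ < r := by rw [hrdef]; linarith
  have hrq : r < q⁻¹ := by rw [hrdef]; linarith
  have hr0 : (0:ℝ) < r := lt_trans one_pos hr1
  have hρ0 : (0:ℝ) < ρ := lt_trans one_pos hρ1
  set u' : ℝ := (r⁻¹ + ρ⁻¹)/2 with hu'def
  have hinvlt : r⁻¹ < ρ⁻¹ := by
    apply inv_strictAnti₀ hρ0 hρr
  have h1 : r⁻¹ < u' := by rw [hu'def]; linarith
  have h2' : u' < ρ⁻¹ := by rw [hu'def]; linarith
  have hρinv1 : ρ⁻¹ < 1 := by
    rw [inv_lt_one_iff₀]; right; exact hρ1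
  have h2 : u' < 1 := lt_trans h2' hρinv1
  have hu'0 : (0:ℝ) < u' := lt_trans (by positivity) h1
  have hρu' : ρ * u' < 1 := by
    calc ρ * u' < ρ * ρ⁻¹ := by exact (mul_lt_mul_iff_right₀ hρ0).2 h2'
      _ = 1 := mul_inv_cancel₀ (ne_of_gt hρ0)
  set C : ℝ := 2*(9*(Real.sqrt (2*q))⁻¹)*((1-(r⁻¹/u'))⁻¹)^2 with hCdef
  have hC0 : 0 ≤ C := by
    rw [hCdef]
    have hs : (0:ℝ) < Real.sqrt (2*q) := Real.sqrt_pos.2 (by linarith [q_pos])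
    positivity
  have hnon : Nonempty (Set.Icc (-1:ℝ) 1) := ⟨⟨0, by norm_num⟩⟩
  -- eventual bounds
  have hbound : ∀ M : ℕ, 0 < M →
      (∀ x : Set.Icc (-1:ℝ) 1,
        |(chebInterp M (fun t => Real.sqrt (2 - t))).eval (x : ℝ) -
          Real.sqrt (2 - (x : ℝ))| ≤ C * u'^M) := by
    intro M hM x
    calc |(chebInterp M (fun t => Real.sqrt (2 - t))).eval (x : ℝ) -
          Real.sqrt (2 - (x : ℝ))|
        ≤ ∑' p : ℕ×ℕ, (if M ≤ Nat.dist p.1 p.2 then 2*|cc r p| else 0) :=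
          err_bound hr1 hrq hM x.2
      _ ≤ C * u'^M := tail_bound hr1 hrq h1 h2 M
  apply squeeze_zero' (g := fun M : ℕ => C * (ρ*u')^M)
  · filter_upwards [Filter.eventually_ge_atTop 1] with M hM
    have hb := hbound M hM
    have hbdd : BddAbove (Set.range (fun x : Set.Icc (-1:ℝ) 1 =>
        |(chebInterp M (fun t => Real.sqrt (2 - t))).eval (x : ℝ) -
          Real.sqrt (2 - (x : ℝ))|)) := by
      refine ⟨C * u'^M, ?_⟩
      rintro y ⟨x, rfl⟩
      exact hb x
    have hsup0 : (0:ℝ) ≤ ⨆ x : Set.Icc (-1:ℝ) 1,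
        |(chebInterp M (fun t => Real.sqrt (2 - t))).eval (x : ℝ) -
          Real.sqrt (2 - (x : ℝ))| := by
      refine le_trans (abs_nonneg _) (le_ciSup hbdd ⟨0, by norm_num⟩)
    positivity
  · filter_upwards [Filter.eventually_ge_atTop 1] with M hM
    have hb := hbound M hM
    have hsup : (⨆ x : Set.Icc (-1:ℝ) 1,
        |(chebInterp M (fun t => Real.sqrt (2 - t))).eval (x : ℝ) -
          Real.sqrt (2 - (x : ℝ))|) ≤ C * u'^M := ciSup_le hb
    calc ρ ^ M * (⨆ x : Set.Icc (-1:ℝ) 1,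
        |(chebInterp M (fun t => Real.sqrt (2 - t))).eval (x : ℝ) -
          Real.sqrt (2 - (x : ℝ))|)
        ≤ ρ ^ M * (C * u'^M) := by
          apply mul_le_mul_of_nonneg_left hsup (by positivity)
      _ = C * (ρ*u')^M := by rw [mul_pow]; ring
  · have := (tendsto_pow_atTop_nhds_zero_of_lt_one (by positivity) hρu').const_mul C
    simpa using this

end Stmt13


/-- Let f(x) = √(2 − x) on [−1,1] and p_M its Lagrange interpolant at the M
Chebyshev nodes. Since the only singularity of f is the real branch point at x = 2, which
lies on the Bernstein ellipse of parameter 2 + √3, the error converges geometrically with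
any rate below 2 + √3: for every ρ with 1 < ρ < 2 + √3,
ρ^M · sup_{x ∈ [−1,1]} |p_M(x) − f(x)| → 0 as M → ∞. -/
theorem stmt_13 :
    ∀ ρ : ℝ, 1 < ρ → ρ < 2 + Real.sqrt 3 →
      Filter.Tendsto (fun M : ℕ =>
          ρ ^ M *
            ⨆ x : Set.Icc (-1 : ℝ) 1,
              |(chebInterp M (fun t => Real.sqrt (2 - t))).eval (x : ℝ) -
                Real.sqrt (2 - (x : ℝ))|)
        Filter.atTop (nhds 0) := Stmt13.final
end
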